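/- arXiv:0807.2155 — 3 statements merged into one kernel-verified Lean document; each statement's English description precedes it below -/
import Mathlib

section
/- Fix a real number q with 0 < q < 1 and a complex number t with |t| < 1. For every X ∈ ℂ with |X| > 1, the Rogers polynomials of type A₁ satisfy the pointwise Harish-Chandra-type asymptotics lim_{n → ∞} X^{−n} · P_n(X; q, t) = ∏_{j=0}^∞ (1 − t X^{−2} qʲ)/(1 − X^{−2} qʲ). (Lemma 4.4 of the paper in the rank-one case.) -/
open scoped BigOperators
open Filter
open scoped Topology

noncomputable section

/-- Symmetric monomial `M_r(X) = X^r + X^{-r}` for `r ≥ 1`, `M_0 = 1`. -/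
def Msym (r : ℕ) (X : ℂ) : ℂ := if r = 0 then 1 else X ^ r + X⁻¹ ^ r

/-- Continuous q-Hermite Laurent polynomial (Macdonald polynomial of type A₁ at t = 0). -/
def PbarA1 (q : ℝ) (n : ℕ) (X : ℂ) : ℂ :=
  Msym n X + ∑ j ∈ Finset.Icc 1 (n / 2),
    (∏ i ∈ Finset.range j, (1 - (q : ℂ) ^ (n - i)) / (1 - (q : ℂ) ^ (i + 1))) *
      Msym (n - 2 * j) X

/-- Global q-Whittaker function of type A₁. -/
def whitA1 (q : ℝ) (X Λ : ℂ) : ℂ :=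
  ∑' n : ℕ, ((q ^ ((n : ℝ) ^ 2 / 4) : ℝ) : ℂ) * X ^ n * PbarA1 q n Λ /
    ∏ j ∈ Finset.Icc 1 n, (1 - (q : ℂ) ^ j)

/-- Theta function `θ(Λ) = ∑_{j ∈ ℤ} q^{j²/4} Λ^j`. -/
def thetaA1 (q : ℝ) (Λ : ℂ) : ℂ :=
  ∑' j : ℤ, ((q ^ ((j : ℝ) ^ 2 / 4) : ℝ) : ℂ) * Λ ^ j

/-- Rogers Laurent polynomial (symmetric Macdonald polynomial of type A₁). -/
def RogersA1 (q : ℝ) (t : ℂ) (n : ℕ) (X : ℂ) : ℂ :=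
  Msym n X + ∑ j ∈ Finset.Icc 1 (n / 2),
    (∏ i ∈ Finset.range j,
      ((1 - (q : ℂ) ^ (n - i)) * (1 - t * (q : ℂ) ^ i)) /
      ((1 - (q : ℂ) ^ (1 + i)) * (1 - t * (q : ℂ) ^ (n - i - 1)))) *
    Msym (n - 2 * j) X

/-- Global q,t-spherical function of type A₁, with `t = s²`. -/
def sphA1 (q s : ℝ) (X Λ : ℂ) : ℂ :=
  ∑' n : ℕ, (s : ℂ) ^ n * ((q ^ ((n : ℝ) ^ 2 / 4) : ℝ) : ℂ) *
    RogersA1 q ((s : ℂ) ^ 2) n X * RogersA1 q ((s : ℂ) ^ 2) n Λ *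
    ∏ i ∈ Finset.range n,
      ((1 - (s : ℂ) ^ 2 * (q : ℂ) ^ i) * (1 - (s : ℂ) ^ 2 * (q : ℂ) ^ (i + 1))) /
      ((1 - ((s : ℂ) ^ 2) ^ 2 * (q : ℂ) ^ i) * (1 - (q : ℂ) ^ (i + 1)))

/-- Macdonald truncated theta weight function of type A₁. -/
def muA1 (q : ℝ) (t : ℂ) (X : ℂ) : ℂ :=
  ∏' j : ℕ, ((1 - X ^ 2 * (q : ℂ) ^ j) * (1 - X⁻¹ ^ 2 * (q : ℂ) ^ (j + 1))) /
    ((1 - t * X ^ 2 * (q : ℂ) ^ j) * (1 - t * X⁻¹ ^ 2 * (q : ℂ) ^ (j + 1)))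

namespace RogersAux

def aco (q : ℝ) (t : ℂ) (j : ℕ) : ℂ :=
  ∏ i ∈ Finset.range j, (1 - t * (q:ℂ)^i) / (1 - (q:ℂ)^(1+i))

def cco (q : ℝ) (t : ℂ) (n j : ℕ) : ℂ :=
  ∏ i ∈ Finset.range j,
    ((1 - (q:ℂ)^(n-i)) * (1 - t * (q:ℂ)^i)) /
    ((1 - (q:ℂ)^(1+i)) * (1 - t * (q:ℂ)^(n-i-1)))

/-- the uniform bound constant -/
def Kb (q : ℝ) (t : ℂ) : ℝ :=
  Real.exp ((1-q)⁻¹ + (1-q)⁻¹*(1-q)⁻¹ + (1-‖t‖)⁻¹*(1-q)⁻¹)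

variable {q : ℝ} {t : ℂ}

lemma norm_q_pow (hq0 : 0 < q) (m : ℕ) : ‖((q:ℂ))^m‖ = q^m := by
  rw [norm_pow, Complex.norm_real, Real.norm_eq_abs, abs_of_pos hq0]

lemma one_sub_ne {w : ℂ} (hw : ‖w‖ < 1) : (1:ℂ) - w ≠ 0 := by
  intro h
  have : (1:ℂ) = w := by linear_combination h
  rw [← this] at hw; simp at hw

lemma norm_one_sub_inv_le {w : ℂ} (hw : ‖w‖ < 1) : ‖((1:ℂ) - w)⁻¹‖ ≤ (1 - ‖w‖)⁻¹ := by
  rw [norm_inv]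
  have h1 : (0:ℝ) < 1 - ‖w‖ := by linarith
  have h2 : 1 - ‖w‖ ≤ ‖(1:ℂ) - w‖ := by
    calc 1 - ‖w‖ = ‖(1:ℂ)‖ - ‖w‖ := by simp
    _ ≤ ‖(1:ℂ) - w‖ := norm_sub_norm_le 1 w
  exact inv_anti₀ h1 h2

lemma inv_one_sub_le_exp {x c : ℝ} (hx : 0 ≤ x) (hxc : x ≤ c) (hc : c < 1) :
    (1 - x)⁻¹ ≤ Real.exp (x * (1 - c)⁻¹) := by
  have h1 : (0:ℝ) < 1 - c := by linarith
  have h2 : (0:ℝ) < 1 - x := by linarith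
  have h3 : (1 - x)⁻¹ = 1 + x / (1 - x) := by field_simp; ring
  rw [h3]
  have hx2 : x / (1 - x) ≤ x / (1 - c) := by
    apply div_le_div_of_nonneg_left hx h1
    linarith
  have := Real.add_one_le_exp (x * (1 - c)⁻¹)
  simp only [div_eq_mul_inv] at hx2 ⊢
  linarith

lemma norm_one_sub_t_q_inv_le (hq0 : 0 < q) (hq1 : q < 1) (ht : ‖t‖ < 1) (m : ℕ) :
    ‖((1:ℂ) - t * (q:ℂ)^m)⁻¹‖ ≤ Real.exp (‖t‖ * q^m * (1-‖t‖)⁻¹) := by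
  have hn : ‖t * (q:ℂ)^m‖ = ‖t‖ * q^m := by rw [norm_mul, norm_q_pow hq0]
  have hqm1 : q^m ≤ 1 := pow_le_one₀ hq0.le hq1.le
  have hlt : ‖t * (q:ℂ)^m‖ < 1 := by
    rw [hn]
    calc ‖t‖ * q^m ≤ ‖t‖ * 1 := by
          apply mul_le_mul_of_nonneg_left hqm1 (norm_nonneg t)
    _ < 1 := by simpa using ht
  refine le_trans (norm_one_sub_inv_le hlt) ?_
  rw [hn]
  exact inv_one_sub_le_exp (by positivity) (by
    calc ‖t‖ * q^m ≤ ‖t‖ * 1 := mul_le_mul_of_nonneg_left hqm1 (norm_nonneg t)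
    _ = ‖t‖ := by ring) ht

lemma norm_one_sub_q_inv_le (hq0 : 0 < q) (hq1 : q < 1) (m : ℕ) (hm : 1 ≤ m) :
    ‖((1:ℂ) - (q:ℂ)^m)⁻¹‖ ≤ Real.exp (q^m * (1-q)⁻¹) := by
  have hlt : ‖((q:ℂ))^m‖ < 1 := by
    rw [norm_q_pow hq0]; exact pow_lt_one₀ hq0.le hq1 (by omega)
  refine le_trans (norm_one_sub_inv_le hlt) ?_
  rw [norm_q_pow hq0]
  exact inv_one_sub_le_exp (by positivity)
    (le_trans (pow_le_pow_of_le_one hq0.le hq1.le hm) (by simp)) hq1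

lemma norm_one_sub_t_q_le (hq0 : 0 < q) (hq1 : q < 1) (ht : ‖t‖ < 1) (m : ℕ) :
    ‖(1:ℂ) - t * (q:ℂ)^m‖ ≤ Real.exp (q^m) := by
  calc ‖(1:ℂ) - t * (q:ℂ)^m‖ ≤ ‖(1:ℂ)‖ + ‖t * (q:ℂ)^m‖ := norm_sub_le _ _
  _ = 1 + ‖t‖ * q^m := by rw [norm_one, norm_mul, norm_q_pow hq0]
  _ ≤ 1 + q^m := by
      have : ‖t‖ * q^m ≤ 1 * q^m :=
        mul_le_mul_of_nonneg_right ht.le (by positivity)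
      linarith
  _ ≤ Real.exp (q^m) := by
      have := Real.add_one_le_exp (q^m); linarith

lemma norm_one_sub_q_le_one (hq0 : 0 < q) (hq1 : q < 1) (m : ℕ) :
    ‖(1:ℂ) - (q:ℂ)^m‖ ≤ 1 := by
  have h1 : ((1:ℂ) - (q:ℂ)^m) = ((1 - q^m : ℝ) : ℂ) := by push_cast; ring
  rw [h1, Complex.norm_real, Real.norm_eq_abs, abs_of_nonneg]
  · nlinarith [pow_pos hq0 m, pow_le_one₀ hq0.le hq1.le (n := m)]
  · nlinarith [pow_le_one₀ hq0.le hq1.le (n := m)]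

lemma factor_bound (hq0 : 0 < q) (hq1 : q < 1) (ht : ‖t‖ < 1) (n i : ℕ) :
    ‖((1 - (q:ℂ)^(n-i)) * (1 - t * (q:ℂ)^i)) /
      ((1 - (q:ℂ)^(1+i)) * (1 - t * (q:ℂ)^(n-i-1)))‖
    ≤ Real.exp (q^i + q^(1+i)*(1-q)⁻¹ + ‖t‖*q^(n-i-1)*(1-‖t‖)⁻¹) := by
  rw [div_eq_mul_inv, mul_inv]
  rw [norm_mul, norm_mul, norm_mul]
  have hA := norm_one_sub_q_le_one (q := q) hq0 hq1 (n-i)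
  have hB := norm_one_sub_t_q_le hq0 hq1 ht i
  have hC := norm_one_sub_q_inv_le hq0 hq1 (1+i) (by omega)
  have hD := norm_one_sub_t_q_inv_le hq0 hq1 ht (n-i-1)
  calc ‖(1:ℂ) - (q:ℂ)^(n-i)‖ * ‖(1:ℂ) - t * (q:ℂ)^i‖ *
        (‖((1:ℂ) - (q:ℂ)^(1+i))⁻¹‖ * ‖((1:ℂ) - t * (q:ℂ)^(n-i-1))⁻¹‖)
      ≤ 1 * Real.exp (q^i) * (Real.exp (q^(1+i)*(1-q)⁻¹) *
          Real.exp (‖t‖*q^(n-i-1)*(1-‖t‖)⁻¹)) := by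
        gcongr <;> positivity
  _ = Real.exp (q^i + q^(1+i)*(1-q)⁻¹ + ‖t‖*q^(n-i-1)*(1-‖t‖)⁻¹) := by
        rw [one_mul, ← Real.exp_add, ← Real.exp_add]; ring_nf

lemma sum_geom_le (hq0 : 0 < q) (hq1 : q < 1) (j : ℕ) :
    ∑ i ∈ Finset.range j, q^i ≤ (1-q)⁻¹ := by
  have hsum : Summable (fun i : ℕ => q^i) :=
    summable_geometric_of_lt_one hq0.le hq1
  calc ∑ i ∈ Finset.range j, q^i ≤ ∑' i : ℕ, q^i :=
        Summable.sum_le_tsum _ (fun i _ => (pow_pos hq0 i).le) hsum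
  _ = (1-q)⁻¹ := tsum_geometric_of_lt_one hq0.le hq1

lemma sum_shift_le (hq0 : 0 < q) (hq1 : q < 1) {j n : ℕ} (hjn : j ≤ n) :
    ∑ i ∈ Finset.range j, q^(n-i-1) ≤ (1-q)⁻¹ := by
  have h1 : ∑ i ∈ Finset.range j, q^(n-i-1) ≤ ∑ i ∈ Finset.range j, q^(j-1-i) := by
    apply Finset.sum_le_sum
    intro i hi
    rw [Finset.mem_range] at hi
    exact pow_le_pow_of_le_one hq0.le hq1.le (by omega)
  have h2 : ∑ i ∈ Finset.range j, q^(j-1-i) = ∑ i ∈ Finset.range j, q^i :=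
    Finset.sum_range_reflect (fun i => q^i) j
  rw [h2] at h1
  exact le_trans h1 (sum_geom_le hq0 hq1 j)

lemma norm_cco_le (hq0 : 0 < q) (hq1 : q < 1) (ht : ‖t‖ < 1) {n j : ℕ} (hjn : j ≤ n) :
    ‖cco q t n j‖ ≤ Kb q t := by
  have h1t : (0:ℝ) < 1 - ‖t‖ := by linarith
  have h1q : (0:ℝ) < 1 - q := by linarith
  rw [cco, norm_prod]
  calc ∏ i ∈ Finset.range j, ‖((1 - (q:ℂ)^(n-i)) * (1 - t * (q:ℂ)^i)) /
        ((1 - (q:ℂ)^(1+i)) * (1 - t * (q:ℂ)^(n-i-1)))‖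
      ≤ ∏ i ∈ Finset.range j,
          Real.exp (q^i + q^(1+i)*(1-q)⁻¹ + ‖t‖*q^(n-i-1)*(1-‖t‖)⁻¹) := by
        apply Finset.prod_le_prod (fun i _ => norm_nonneg _)
          (fun i _ => factor_bound hq0 hq1 ht n i)
  _ = Real.exp (∑ i ∈ Finset.range j,
        (q^i + q^(1+i)*(1-q)⁻¹ + ‖t‖*q^(n-i-1)*(1-‖t‖)⁻¹)) := (Real.exp_sum _ _).symm
  _ ≤ Kb q t := by
      rw [Kb, Real.exp_le_exp]
      rw [Finset.sum_add_distrib, Finset.sum_add_distrib]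
      have e1 := sum_geom_le hq0 hq1 j
      have e2 : ∑ i ∈ Finset.range j, q^(1+i)*(1-q)⁻¹ ≤ (1-q)⁻¹*(1-q)⁻¹ := by
        rw [← Finset.sum_mul]
        apply mul_le_mul_of_nonneg_right _ (by positivity)
        calc ∑ i ∈ Finset.range j, q^(1+i) ≤ ∑ i ∈ Finset.range j, q^i :=
              Finset.sum_le_sum (fun i _ =>
                pow_le_pow_of_le_one hq0.le hq1.le (by omega))
        _ ≤ (1-q)⁻¹ := sum_geom_le hq0 hq1 j
      have e3 : ∑ i ∈ Finset.range j, ‖t‖*q^(n-i-1)*(1-‖t‖)⁻¹ ≤ (1-‖t‖)⁻¹*(1-q)⁻¹ := by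
        have : ∀ i ∈ Finset.range j, ‖t‖*q^(n-i-1)*(1-‖t‖)⁻¹ ≤ q^(n-i-1)*(1-‖t‖)⁻¹ := by
          intro i _
          apply mul_le_mul_of_nonneg_right _ (by positivity)
          calc ‖t‖*q^(n-i-1) ≤ 1*q^(n-i-1) :=
                mul_le_mul_of_nonneg_right ht.le (by positivity)
          _ = q^(n-i-1) := one_mul _
        calc ∑ i ∈ Finset.range j, ‖t‖*q^(n-i-1)*(1-‖t‖)⁻¹
            ≤ ∑ i ∈ Finset.range j, q^(n-i-1)*(1-‖t‖)⁻¹ := Finset.sum_le_sum this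
        _ = (∑ i ∈ Finset.range j, q^(n-i-1))*(1-‖t‖)⁻¹ := by rw [Finset.sum_mul]
        _ ≤ (1-q)⁻¹*(1-‖t‖)⁻¹ :=
            mul_le_mul_of_nonneg_right (sum_shift_le hq0 hq1 hjn) (by positivity)
        _ = (1-‖t‖)⁻¹*(1-q)⁻¹ := by ring
      linarith

lemma norm_aco_le (hq0 : 0 < q) (hq1 : q < 1) (ht : ‖t‖ < 1) (j : ℕ) :
    ‖aco q t j‖ ≤ Kb q t := by
  have h1t : (0:ℝ) < 1 - ‖t‖ := by linarith
  have h1q : (0:ℝ) < 1 - q := by linarith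
  rw [aco, norm_prod]
  calc ∏ i ∈ Finset.range j, ‖(1 - t * (q:ℂ)^i) / (1 - (q:ℂ)^(1+i))‖
      ≤ ∏ i ∈ Finset.range j, Real.exp (q^i + q^(1+i)*(1-q)⁻¹) := by
        apply Finset.prod_le_prod (fun i _ => norm_nonneg _)
        intro i _
        rw [div_eq_mul_inv, norm_mul]
        calc ‖(1:ℂ) - t * (q:ℂ)^i‖ * ‖((1:ℂ) - (q:ℂ)^(1+i))⁻¹‖
            ≤ Real.exp (q^i) * Real.exp (q^(1+i)*(1-q)⁻¹) := by
              gcongr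
              · exact norm_one_sub_t_q_le hq0 hq1 ht i
              · exact norm_one_sub_q_inv_le hq0 hq1 (1+i) (by omega)
        _ = Real.exp (q^i + q^(1+i)*(1-q)⁻¹) := (Real.exp_add _ _).symm
  _ = Real.exp (∑ i ∈ Finset.range j, (q^i + q^(1+i)*(1-q)⁻¹)) := (Real.exp_sum _ _).symm
  _ ≤ Kb q t := by
      rw [Kb, Real.exp_le_exp, Finset.sum_add_distrib]
      have e1 := sum_geom_le hq0 hq1 j
      have e2 : ∑ i ∈ Finset.range j, q^(1+i)*(1-q)⁻¹ ≤ (1-q)⁻¹*(1-q)⁻¹ := by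
        rw [← Finset.sum_mul]
        apply mul_le_mul_of_nonneg_right _ (by positivity)
        calc ∑ i ∈ Finset.range j, q^(1+i) ≤ ∑ i ∈ Finset.range j, q^i :=
              Finset.sum_le_sum (fun i _ =>
                pow_le_pow_of_le_one hq0.le hq1.le (by omega))
        _ ≤ (1-q)⁻¹ := sum_geom_le hq0 hq1 j
      have e3 : (0:ℝ) ≤ (1-‖t‖)⁻¹*(1-q)⁻¹ := by positivity
      linarith

lemma Kb_pos : 0 < Kb q t := Real.exp_pos _


lemma rogers_eq (n : ℕ) (X : ℂ) : X⁻¹^n * RogersA1 q t n X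
    = ∑ j ∈ Finset.range (n/2+1), cco q t n j * (X⁻¹^n * Msym (n-2*j) X) := by
  have hset : Finset.range (n/2+1) = insert 0 (Finset.Icc 1 (n/2)) := by
    ext x
    simp only [Finset.mem_range, Finset.mem_insert, Finset.mem_Icc, Nat.lt_succ_iff]
    omega
  rw [hset, Finset.sum_insert (by simp)]
  rw [RogersA1, mul_add, Finset.mul_sum]
  congr 1
  · simp [cco]
  · apply Finset.sum_congr rfl
    intro j hj
    rw [cco]
    ring

/-- the summand function -/
def ff (q : ℝ) (t : ℂ) (X : ℂ) (n j : ℕ) : ℂ :=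
  if j ≤ n/2 then cco q t n j * (X⁻¹^n * Msym (n-2*j) X) else 0

lemma tsum_ff (n : ℕ) (X : ℂ) :
    ∑' j, ff q t X n j = X⁻¹^n * RogersA1 q t n X := by
  rw [rogers_eq]
  rw [tsum_eq_sum (s := Finset.range (n/2+1))
    (by intro j hj; rw [Finset.mem_range] at hj; rw [ff, if_neg]; omega)]
  apply Finset.sum_congr rfl
  intro j hj
  rw [Finset.mem_range] at hj
  rw [ff, if_pos (by omega)]

lemma key_identity {X : ℂ} (hX0 : X ≠ 0) (j m : ℕ) :
    X⁻¹^(2*j+m) * (X^m + X⁻¹^m) = (X⁻¹^2)^j + (X⁻¹^2)^(j+m) := by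
  have h : X⁻¹ * X = 1 := inv_mul_cancel₀ hX0
  rw [pow_add, mul_add]
  congr 1
  · rw [mul_assoc, ← mul_pow, h, one_pow, mul_one, ← pow_mul', Nat.mul_comm]
  · rw [← pow_add, ← pow_mul]
    congr 1
    ring

lemma cco_tendsto (hq0 : 0 < q) (hq1 : q < 1) (ht : ‖t‖ < 1) (j : ℕ) :
    Tendsto (fun n => cco q t n j) atTop (𝓝 (aco q t j)) := by
  have hq : ‖(q:ℂ)‖ < 1 := by
    rw [Complex.norm_real, Real.norm_eq_abs, abs_of_pos hq0]; exact hq1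
  have hq0' : Tendsto (fun n : ℕ => (q:ℂ)^n) atTop (𝓝 0) :=
    tendsto_pow_atTop_nhds_zero_of_norm_lt_one hq
  have hmain : ∀ i ∈ Finset.range j,
      Tendsto (fun n => ((1 - (q:ℂ)^(n-i)) * (1 - t * (q:ℂ)^i)) /
        ((1 - (q:ℂ)^(1+i)) * (1 - t * (q:ℂ)^(n-i-1)))) atTop
        (𝓝 ((1 - t * (q:ℂ)^i) / (1 - (q:ℂ)^(1+i)))) := by
    intro i _
    have hqi : ‖(q:ℂ)^(1+i)‖ < 1 := by
      rw [norm_pow, Complex.norm_real, Real.norm_eq_abs, abs_of_pos hq0]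
      exact pow_lt_one₀ hq0.le hq1 (by omega)
    have htqi : ‖t * (q:ℂ)^i‖ < 1 := by
      rw [norm_mul, norm_pow, Complex.norm_real, Real.norm_eq_abs, abs_of_pos hq0]
      calc ‖t‖ * q^i ≤ ‖t‖ * 1 :=
        mul_le_mul_of_nonneg_left (pow_le_one₀ hq0.le hq1.le) (norm_nonneg t)
      _ < 1 := by simpa using ht
    have h1 : Tendsto (fun n : ℕ => (q:ℂ)^(n-i)) atTop (𝓝 0) :=
      hq0'.comp (tendsto_sub_atTop_nat i)
    have h2 : Tendsto (fun n : ℕ => (q:ℂ)^(n-i-1)) atTop (𝓝 0) :=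
      hq0'.comp ((tendsto_sub_atTop_nat 1).comp (tendsto_sub_atTop_nat i))
    have hnum : Tendsto (fun n : ℕ => (1 - (q:ℂ)^(n-i)) * (1 - t * (q:ℂ)^i)) atTop
        (𝓝 ((1 - 0) * (1 - t * (q:ℂ)^i))) :=
      (tendsto_const_nhds.sub h1).mul tendsto_const_nhds
    have hden : Tendsto (fun n : ℕ => (1 - (q:ℂ)^(1+i)) * (1 - t * (q:ℂ)^(n-i-1))) atTop
        (𝓝 ((1 - (q:ℂ)^(1+i)) * (1 - t * 0))) :=
      tendsto_const_nhds.mul (tendsto_const_nhds.sub (h2.const_mul t))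
    have hden_ne : (1 - (q:ℂ)^(1+i)) * ((1:ℂ) - t * 0) ≠ 0 := by
      rw [mul_zero, sub_zero, mul_one]
      exact one_sub_ne hqi
    have := hnum.div hden hden_ne
    simpa [Pi.div_def] using this
  have := tendsto_finset_prod (Finset.range j) hmain
  simpa [cco, aco] using this


lemma ff_tendsto (hq0 : 0 < q) (hq1 : q < 1) (ht : ‖t‖ < 1) {X : ℂ} (hX : 1 < ‖X‖) (j : ℕ) :
    Tendsto (fun n => ff q t X n j) atTop (𝓝 (aco q t j * (X⁻¹^2)^j)) := by
  have hX0 : X ≠ 0 := by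
    intro h; rw [h, norm_zero] at hX; linarith
  have hXi : ‖X⁻¹^2‖ < 1 := by
    rw [norm_pow, norm_inv]
    have : ‖X‖⁻¹ < 1 := by
      rw [inv_lt_one_iff₀]; right; exact hX
    exact pow_lt_one₀ (by positivity) this (by omega)
  have hpow : Tendsto (fun m : ℕ => (X⁻¹^2)^m) atTop (𝓝 0) :=
    tendsto_pow_atTop_nhds_zero_of_norm_lt_one hXi
  have h2 : Tendsto (fun n : ℕ => X⁻¹^n * Msym (n-2*j) X) atTop (𝓝 ((X⁻¹^2)^j)) := by
    have heq : ∀ᶠ n in atTop,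
        (X⁻¹^2)^j + (X⁻¹^2)^(n-j) = X⁻¹^n * Msym (n-2*j) X := by
      filter_upwards [eventually_ge_atTop (2*j+1)] with n hn
      obtain ⟨m, rfl⟩ : ∃ m, n = 2*j+m := ⟨n-2*j, by omega⟩
      have e1 : 2*j+m-(2*j) = m := by omega
      have e2 : 2*j+m-j = j+m := by omega
      rw [e1, e2, Msym, if_neg (by omega), key_identity hX0 j m]
    have htend : Tendsto (fun n : ℕ => (X⁻¹^2)^j + (X⁻¹^2)^(n-j)) atTop
        (𝓝 ((X⁻¹^2)^j + 0)) :=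
      tendsto_const_nhds.add (hpow.comp (tendsto_sub_atTop_nat j))
    rw [add_zero] at htend
    exact htend.congr' heq
  have heq2 : ∀ᶠ n in atTop,
      cco q t n j * (X⁻¹^n * Msym (n-2*j) X) = ff q t X n j := by
    filter_upwards [eventually_ge_atTop (2*j)] with n hn
    rw [ff, if_pos (by omega)]
  exact (((cco_tendsto hq0 hq1 ht j).mul h2)).congr' heq2


lemma norm_z_lt_one {X : ℂ} (hX : 1 < ‖X‖) : ‖X⁻¹^2‖ < 1 := by
  rw [norm_pow, norm_inv]
  have : ‖X‖⁻¹ < 1 := by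
    rw [inv_lt_one_iff₀]; right; exact hX
  exact pow_lt_one₀ (by positivity) this (by omega)

lemma ff_bound (hq0 : 0 < q) (hq1 : q < 1) (ht : ‖t‖ < 1) {X : ℂ} (hX : 1 < ‖X‖)
    (n j : ℕ) : ‖ff q t X n j‖ ≤ 2 * Kb q t * ‖X⁻¹^2‖^j := by
  have hKb : 0 < Kb q t := Kb_pos
  by_cases hj : j ≤ n/2
  · rw [ff, if_pos hj, norm_mul]
    have hc : ‖cco q t n j‖ ≤ Kb q t := norm_cco_le hq0 hq1 ht (by omega)
    have hm : ‖X⁻¹^n * Msym (n-2*j) X‖ ≤ 2 * ‖X⁻¹^2‖^j := by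
      have h2j : 2*j ≤ n := by omega
      by_cases hm0 : n - 2*j = 0
      · have hn2j : n = 2*j := by omega
        rw [hm0, Msym, if_pos rfl, mul_one, hn2j, norm_pow, norm_inv]
        have : (‖X‖⁻¹)^(2*j) = (‖X⁻¹^2‖)^j := by
          rw [norm_pow, norm_inv, ← pow_mul]
        rw [this]
        nlinarith [pow_nonneg (norm_nonneg (X⁻¹^2)) j]
      · obtain ⟨m, rfl⟩ : ∃ m, n = 2*j+m := ⟨n-2*j, by omega⟩
        have e1 : 2*j+m-(2*j) = m := by omega
        have hX0 : X ≠ 0 := by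
          intro h; rw [h, norm_zero] at hX; linarith
        rw [e1, Msym, if_neg (by omega), key_identity hX0 j m]
        have hz1 : ‖X⁻¹^2‖ ≤ 1 := (norm_z_lt_one hX).le
        calc ‖(X⁻¹^2)^j + (X⁻¹^2)^(j+m)‖ ≤ ‖(X⁻¹^2)^j‖ + ‖(X⁻¹^2)^(j+m)‖ := norm_add_le _ _
        _ = ‖X⁻¹^2‖^j + ‖X⁻¹^2‖^(j+m) := by rw [norm_pow (X⁻¹^2) j, norm_pow (X⁻¹^2) (j+m)]
        _ ≤ ‖X⁻¹^2‖^j + ‖X⁻¹^2‖^j := by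
            have := pow_le_pow_of_le_one (norm_nonneg (X⁻¹^2)) hz1
              (Nat.le_add_right j m)
            linarith
        _ = 2 * ‖X⁻¹^2‖^j := by ring
    calc ‖cco q t n j‖ * ‖X⁻¹^n * Msym (n-2*j) X‖
        ≤ Kb q t * (2 * ‖X⁻¹^2‖^j) :=
          mul_le_mul hc hm (norm_nonneg _) hKb.le
    _ = 2 * Kb q t * ‖X⁻¹^2‖^j := by ring
  · rw [ff, if_neg hj, norm_zero]
    positivity

lemma tendsto_rogers (hq0 : 0 < q) (hq1 : q < 1) (ht : ‖t‖ < 1) {X : ℂ} (hX : 1 < ‖X‖) :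
    Tendsto (fun n : ℕ => X⁻¹^n * RogersA1 q t n X) atTop
      (𝓝 (∑' j : ℕ, aco q t j * (X⁻¹^2)^j)) := by
  have hb : Summable (fun j : ℕ => 2 * Kb q t * ‖X⁻¹^2‖^j) :=
    (summable_geometric_of_lt_one (norm_nonneg _) (norm_z_lt_one hX)).mul_left _
  have := tendsto_tsum_of_dominated_convergence hb
    (ff_tendsto hq0 hq1 ht hX)
    (Eventually.of_forall (fun n => ff_bound hq0 hq1 ht hX n))
  have heq : (fun n : ℕ => ∑' j, ff q t X n j)
      = (fun n : ℕ => X⁻¹^n * RogersA1 q t n X) := by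
    funext n; exact tsum_ff n X
  rwa [← heq]

lemma summable_aco_mul (hq0 : 0 < q) (hq1 : q < 1) (ht : ‖t‖ < 1) {w : ℂ} (hw : ‖w‖ < 1) :
    Summable (fun j : ℕ => aco q t j * w^j) := by
  apply Summable.of_norm_bounded (g := fun j : ℕ => Kb q t * ‖w‖^j)
    ((summable_geometric_of_lt_one (norm_nonneg _) hw).mul_left _)
  intro j
  rw [norm_mul, norm_pow]
  exact mul_le_mul_of_nonneg_right (norm_aco_le hq0 hq1 ht j) (by positivity)

lemma norm_q_mul_lt (hq0 : 0 < q) (hq1 : q < 1) {w : ℂ} (hw : ‖w‖ < 1) :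
    ‖(q:ℂ)*w‖ < 1 := by
  rw [norm_mul, Complex.norm_real, Real.norm_eq_abs, abs_of_pos hq0]
  nlinarith [norm_nonneg w]

lemma aco_rec (hq0 : 0 < q) (hq1 : q < 1) (j : ℕ) :
    aco q t (j+1) * (1 - (q:ℂ)^(1+j)) = aco q t j * (1 - t*(q:ℂ)^j) := by
  rw [aco, Finset.prod_range_succ, ← aco]
  have hne : (1:ℂ) - (q:ℂ)^(1+j) ≠ 0 := by
    apply one_sub_ne
    rw [norm_pow, Complex.norm_real, Real.norm_eq_abs, abs_of_pos hq0]
    exact pow_lt_one₀ hq0.le hq1 (by omega)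
  field_simp

lemma func_eq (hq0 : 0 < q) (hq1 : q < 1) (ht : ‖t‖ < 1) {w : ℂ} (hw : ‖w‖ < 1) :
    (1 - w) * (∑' j : ℕ, aco q t j * w^j)
      = (1 - t*w) * (∑' j : ℕ, aco q t j * ((q:ℂ)*w)^j) := by
  have S1 : Summable (fun j : ℕ => aco q t j * w^j) := summable_aco_mul hq0 hq1 ht hw
  have S2 : Summable (fun j : ℕ => aco q t j * ((q:ℂ)*w)^j) :=
    summable_aco_mul hq0 hq1 ht (norm_q_mul_lt hq0 hq1 hw)
  have key : (∑' j : ℕ, aco q t j * w^j) - (∑' j : ℕ, aco q t j * ((q:ℂ)*w)^j)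
      = w * (∑' j : ℕ, aco q t j * w^j)
        - t*w*(∑' j : ℕ, aco q t j * ((q:ℂ)*w)^j) := by
    rw [← Summable.tsum_sub S1 S2]
    rw [Summable.tsum_eq_zero_add (S1.sub S2)]
    simp only [pow_zero, mul_one, sub_self, zero_add]
    have hcongr : ∀ j : ℕ, aco q t (j+1) * w^(j+1) - aco q t (j+1) * ((q:ℂ)*w)^(j+1)
        = w*(aco q t j*w^j) - t*w*(aco q t j*((q:ℂ)*w)^j) := by
      intro j
      have hrec := aco_rec (t := t) hq0 hq1 j
      have h1 : ((q:ℂ)*w)^(j+1) = (q:ℂ)^(j+1) * w^(j+1) := mul_pow _ _ _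
      have h2 : ((q:ℂ)*w)^j = (q:ℂ)^j * w^j := mul_pow _ _ _
      rw [h1, h2]
      have h3 : (q:ℂ)^(1+j) = (q:ℂ)^(j+1) := by rw [add_comm]
      rw [h3] at hrec
      linear_combination w^(j+1) * hrec
    rw [tsum_congr hcongr]
    rw [Summable.tsum_sub (S1.mul_left w) (S2.mul_left (t*w)), tsum_mul_left, tsum_mul_left]
  linear_combination key

lemma iterate_eq (hq0 : 0 < q) (hq1 : q < 1) (ht : ‖t‖ < 1) {z : ℂ} (hz : ‖z‖ < 1)
    (N : ℕ) :
    (∑' j : ℕ, aco q t j * z^j)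
      = (∏ j ∈ Finset.range N, (1 - t*z*(q:ℂ)^j)/(1 - z*(q:ℂ)^j))
        * (∑' j : ℕ, aco q t j * ((q:ℂ)^N*z)^j) := by
  induction N with
  | zero => simp
  | succ N ih =>
    rw [ih, Finset.prod_range_succ]
    have hqN : ‖(q:ℂ)^N*z‖ < 1 := by
      rw [norm_mul, norm_pow, Complex.norm_real, Real.norm_eq_abs, abs_of_pos hq0]
      have h1 : q^N ≤ 1 := pow_le_one₀ hq0.le hq1.le
      nlinarith [norm_nonneg z, pow_pos hq0 N]
    have hfe := func_eq hq0 hq1 ht hqN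
    have harg : (q:ℂ)*((q:ℂ)^N*z) = (q:ℂ)^(N+1)*z := by ring
    rw [harg] at hfe
    have hne : (1:ℂ) - z*(q:ℂ)^N ≠ 0 := by
      apply one_sub_ne
      rw [norm_mul, norm_pow, Complex.norm_real, Real.norm_eq_abs, abs_of_pos hq0]
      have h1 : q^N ≤ 1 := pow_le_one₀ hq0.le hq1.le
      nlinarith [norm_nonneg z, pow_pos hq0 N]
    have hstep : (∑' j : ℕ, aco q t j * ((q:ℂ)^N*z)^j)
        = (1 - t*z*(q:ℂ)^N)/(1 - z*(q:ℂ)^N)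
          * (∑' j : ℕ, aco q t j * ((q:ℂ)^(N+1)*z)^j) := by
      rw [div_mul_eq_mul_div, eq_div_iff hne]
      linear_combination hfe
    rw [hstep]
    ring

lemma aco_zero : aco q t 0 = 1 := by simp [aco]

lemma tsum_near_one (hq0 : 0 < q) (hq1 : q < 1) (ht : ‖t‖ < 1) {u : ℂ} (hu : ‖u‖ < 1) :
    ‖(∑' j : ℕ, aco q t j * u^j) - 1‖ ≤ Kb q t * ‖u‖ * (1 - ‖u‖)⁻¹ := by
  have S1 : Summable (fun j : ℕ => aco q t j * u^j) := summable_aco_mul hq0 hq1 ht hu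
  rw [Summable.tsum_eq_zero_add S1, aco_zero, pow_zero, mul_one, add_sub_cancel_left]
  have Sg : Summable (fun j : ℕ => Kb q t * ‖u‖ * ‖u‖^j) :=
    (summable_geometric_of_lt_one (norm_nonneg _) hu).mul_left _
  have Snorm : Summable (fun j : ℕ => ‖aco q t (j+1) * u^(j+1)‖) := by
    apply Summable.of_nonneg_of_le (fun j => norm_nonneg _) _ Sg
    intro j
    rw [norm_mul, norm_pow, pow_succ']
    calc ‖aco q t (j+1)‖ * (‖u‖ * ‖u‖^j)
        ≤ Kb q t * (‖u‖ * ‖u‖^j) :=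
          mul_le_mul_of_nonneg_right (norm_aco_le hq0 hq1 ht (j+1)) (by positivity)
    _ = Kb q t * ‖u‖ * ‖u‖^j := by ring
  calc ‖∑' j : ℕ, aco q t (j+1) * u^(j+1)‖
      ≤ ∑' j : ℕ, ‖aco q t (j+1) * u^(j+1)‖ := norm_tsum_le_tsum_norm Snorm
  _ ≤ ∑' j : ℕ, Kb q t * ‖u‖ * ‖u‖^j := by
      apply Summable.tsum_le_tsum _ Snorm Sg
      intro j
      rw [norm_mul, norm_pow, pow_succ']
      calc ‖aco q t (j+1)‖ * (‖u‖ * ‖u‖^j)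
          ≤ Kb q t * (‖u‖ * ‖u‖^j) :=
            mul_le_mul_of_nonneg_right (norm_aco_le hq0 hq1 ht (j+1)) (by positivity)
      _ = Kb q t * ‖u‖ * ‖u‖^j := by ring
  _ = Kb q t * ‖u‖ * (1 - ‖u‖)⁻¹ := by
      rw [tsum_mul_left, tsum_geometric_of_lt_one (norm_nonneg _) hu]

lemma tendsto_tail (hq0 : 0 < q) (hq1 : q < 1) (ht : ‖t‖ < 1) {z : ℂ} (hz : ‖z‖ < 1) :
    Tendsto (fun N : ℕ => ∑' j : ℕ, aco q t j * ((q:ℂ)^N*z)^j) atTop (𝓝 1) := by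
  rw [tendsto_iff_norm_sub_tendsto_zero]
  have hb : ∀ N : ℕ, ‖(∑' j : ℕ, aco q t j * ((q:ℂ)^N*z)^j) - 1‖
      ≤ (Kb q t * (1 - ‖z‖)⁻¹) * q^N := by
    intro N
    have hnorm : ‖(q:ℂ)^N*z‖ = q^N * ‖z‖ := by
      rw [norm_mul, norm_pow, Complex.norm_real, Real.norm_eq_abs, abs_of_pos hq0]
    have hqN1 : q^N ≤ 1 := pow_le_one₀ hq0.le hq1.le
    have hu : ‖(q:ℂ)^N*z‖ < 1 := by
      rw [hnorm]; nlinarith [norm_nonneg z, pow_pos hq0 N]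
    refine le_trans (tsum_near_one hq0 hq1 ht hu) ?_
    rw [hnorm]
    have h1 : (1 - q^N*‖z‖)⁻¹ ≤ (1 - ‖z‖)⁻¹ :=
      inv_anti₀ (by linarith) (by nlinarith [pow_pos hq0 N, norm_nonneg z])
    have hKb : 0 < Kb q t := Kb_pos
    have h2 : Kb q t * (q^N*‖z‖) ≤ Kb q t * (q^N*1) := by
      apply mul_le_mul_of_nonneg_left _ hKb.le
      nlinarith [pow_pos hq0 N]
    have h3 : (0:ℝ) ≤ (1 - q^N*‖z‖)⁻¹ := by
      apply inv_nonneg.mpr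
      nlinarith [pow_pos hq0 N, norm_nonneg z]
    calc Kb q t * (q^N*‖z‖) * (1 - q^N*‖z‖)⁻¹
        ≤ Kb q t * (q^N*1) * (1 - ‖z‖)⁻¹ :=
          mul_le_mul h2 h1 h3 (mul_nonneg hKb.le (by positivity))
    _ = (Kb q t * (1 - ‖z‖)⁻¹) * q^N := by ring
  have hgeo : Tendsto (fun N : ℕ => (Kb q t * (1 - ‖z‖)⁻¹) * q^N) atTop (𝓝 0) := by
    have := tendsto_pow_atTop_nhds_zero_of_lt_one hq0.le hq1
    simpa using this.const_mul (Kb q t * (1 - ‖z‖)⁻¹)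
  exact squeeze_zero (fun N => norm_nonneg _) hb hgeo

lemma norm_zq_lt (hq0 : 0 < q) (hq1 : q < 1) {z : ℂ} (hz : ‖z‖ < 1) (j : ℕ) :
    ‖z*(q:ℂ)^j‖ < 1 := by
  rw [norm_mul, norm_pow, Complex.norm_real, Real.norm_eq_abs, abs_of_pos hq0]
  have h1 : q^j ≤ 1 := pow_le_one₀ hq0.le hq1.le
  nlinarith [norm_nonneg z, pow_pos hq0 j]

lemma norm_tzq_lt (hq0 : 0 < q) (hq1 : q < 1) (ht : ‖t‖ < 1) {z : ℂ} (hz : ‖z‖ < 1)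
    (j : ℕ) : ‖t*z*(q:ℂ)^j‖ < 1 := by
  rw [norm_mul, norm_mul, norm_pow, Complex.norm_real, Real.norm_eq_abs, abs_of_pos hq0]
  have h1 : q^j ≤ 1 := pow_le_one₀ hq0.le hq1.le
  have h2 : ‖t‖ * ‖z‖ ≤ ‖z‖ := by nlinarith [norm_nonneg z]
  have h3 : ‖t‖ * ‖z‖ * q^j ≤ ‖z‖ * q^j := by
    apply mul_le_mul_of_nonneg_right h2 (pow_pos hq0 j).le
  nlinarith [norm_nonneg z, pow_pos hq0 j]

lemma multipliable_r (hq0 : 0 < q) (hq1 : q < 1) (ht : ‖t‖ < 1) {z : ℂ} (hz : ‖z‖ < 1) :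
    Multipliable (fun j : ℕ => (1 - t*z*(q:ℂ)^j)/(1 - z*(q:ℂ)^j)) := by
  have hden : ∀ j : ℕ, (1:ℂ) - z*(q:ℂ)^j ≠ 0 := fun j => one_sub_ne (norm_zq_lt hq0 hq1 hz j)
  have hnum : ∀ j : ℕ, (1:ℂ) - t*z*(q:ℂ)^j ≠ 0 :=
    fun j => one_sub_ne (norm_tzq_lt hq0 hq1 ht hz j)
  refine Complex.multipliable_of_summable_log ((fun h : Unit → Summable (fun j : ℕ =>
    Complex.log ((1 - t*z*(q:ℂ)^j)/(1 - z*(q:ℂ)^j))) => h ()) ?_)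
  intro _
  set u : ℕ → ℂ := fun j => (z*(q:ℂ)^j*(1-t))/(1 - z*(q:ℂ)^j) with hu
  set C : ℝ := 2*(1-‖z‖)⁻¹ with hC
  have hC0 : 0 < C := by
    rw [hC]
    have : (0:ℝ) < 1 - ‖z‖ := by linarith
    positivity
  have hru : ∀ j : ℕ, (1 - t*z*(q:ℂ)^j)/(1 - z*(q:ℂ)^j) = 1 + u j := by
    intro j
    rw [hu]
    simp only
    rw [eq_comm, add_comm, div_add' _ _ _ (hden j)]
    congr 1
    ring
  have hub : ∀ j : ℕ, ‖u j‖ ≤ C * q^j := by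
    intro j
    rw [hu]
    simp only
    rw [norm_div, norm_mul, norm_mul, norm_pow, Complex.norm_real, Real.norm_eq_abs,
      abs_of_pos hq0, div_eq_mul_inv]
    have h1 : ‖(1:ℂ) - t‖ ≤ 2 := by
      calc ‖(1:ℂ) - t‖ ≤ ‖(1:ℂ)‖ + ‖t‖ := norm_sub_le _ _
      _ ≤ 2 := by rw [norm_one]; linarith
    have h2 : ‖(1:ℂ) - z*(q:ℂ)^j‖⁻¹ ≤ (1-‖z‖)⁻¹ := by
      have := norm_one_sub_inv_le (norm_zq_lt hq0 hq1 hz j)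
      rw [norm_inv] at this
      refine le_trans this (inv_anti₀ (by linarith) ?_)
      rw [norm_mul, norm_pow, Complex.norm_real, Real.norm_eq_abs, abs_of_pos hq0]
      have h1' : q^j ≤ 1 := pow_le_one₀ hq0.le hq1.le
      nlinarith [norm_nonneg z, pow_pos hq0 j]
    calc ‖z‖ * q^j * ‖(1:ℂ) - t‖ * ‖(1:ℂ) - z*(q:ℂ)^j‖⁻¹
        ≤ 1 * q^j * 2 * (1-‖z‖)⁻¹ := by
          apply mul_le_mul (mul_le_mul (by nlinarith [pow_pos hq0 j, norm_nonneg z]) h1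
            (norm_nonneg _) (by positivity)) h2 (by positivity) (by positivity)
    _ = C * q^j := by rw [hC]; ring
  apply Summable.of_norm_bounded_eventually_nat (g := fun j => 3/2 * (C * q^j))
    (((summable_geometric_of_lt_one hq0.le hq1).mul_left C).mul_left (3/2))
  have hev : ∀ᶠ j : ℕ in atTop, C * q^j ≤ 1/2 := by
    have hgeo : Tendsto (fun j : ℕ => C * q^j) atTop (𝓝 0) := by
      simpa using (tendsto_pow_atTop_nhds_zero_of_lt_one hq0.le hq1).const_mul C
    have := hgeo.eventually_le_const (show (0:ℝ) < 1/2 by norm_num)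
    exact this
  filter_upwards [hev] with j hj
  rw [hru j]
  have huj : ‖u j‖ ≤ 1/2 := le_trans (hub j) hj
  calc ‖Complex.log (1 + u j)‖ ≤ 3/2 * ‖u j‖ := Complex.norm_log_one_add_half_le_self huj
  _ ≤ 3/2 * (C * q^j) := by
      have := hub j
      linarith

lemma qbinom (hq0 : 0 < q) (hq1 : q < 1) (ht : ‖t‖ < 1) {z : ℂ} (hz : ‖z‖ < 1) :
    (∑' j : ℕ, aco q t j * z^j)
      = ∏' j : ℕ, (1 - t*z*(q:ℂ)^j)/(1 - z*(q:ℂ)^j) := by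
  have hmult := multipliable_r hq0 hq1 ht hz
  have hprod := hmult.hasProd.tendsto_prod_nat
  have htail := tendsto_tail hq0 hq1 ht hz
  have hcomb := hprod.mul htail
  rw [mul_one] at hcomb
  have hconst : (fun N : ℕ => (∏ j ∈ Finset.range N, (1 - t*z*(q:ℂ)^j)/(1 - z*(q:ℂ)^j))
      * (∑' j : ℕ, aco q t j * ((q:ℂ)^N*z)^j))
      = fun _ : ℕ => (∑' j : ℕ, aco q t j * z^j) := by
    funext N
    exact (iterate_eq hq0 hq1 ht hz N).symm
  rw [hconst] at hcomb
  exact tendsto_nhds_unique tendsto_const_nhds hcomb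

end RogersAux

/-- Harish-Chandra-type pointwise asymptotics of the Rogers polynomials. -/
theorem rogersA1_asymptotics (q : ℝ) (hq0 : 0 < q) (hq1 : q < 1)
    (t : ℂ) (ht : ‖t‖ < 1) (X : ℂ) (hX : 1 < ‖X‖) :
    Filter.Tendsto (fun n : ℕ => X⁻¹ ^ n * RogersA1 q t n X) Filter.atTop
      (nhds (∏' j : ℕ, (1 - t * X⁻¹ ^ 2 * (q : ℂ) ^ j) / (1 - X⁻¹ ^ 2 * (q : ℂ) ^ j))) := by
  have hz : ‖X⁻¹^2‖ < 1 := RogersAux.norm_z_lt_one hX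
  have h := RogersAux.tendsto_rogers hq0 hq1 ht hX
  rwa [RogersAux.qbinom hq0 hq1 ht hz] at h

end
end

section
/- Fix a real number q with 0 < q < 1. For all X, Λ ∈ ℂ with X ≠ 0 and Λ ≠ 0: lim_{m → ∞} Ψ̃(X q^{m/2}, Λ q^{m/2}) = ∑_{n=0}^∞ q^{n²/4} (X/Λ)ⁿ / ∏_{j=1}^n (1 − qʲ), i.e. in this extreme Whittaker limit the global q-Whittaker function degenerates to the quadratic q-exponential series in X/Λ. (Formula (4.84) of the paper in the rank-one case.) -/
open scoped BigOperators
open Filter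

noncomputable section

namespace WhitAux

lemma prod_Icc_one (f : ℕ → ℝ) (n : ℕ) :
    ∏ k ∈ Finset.Icc 1 n, f k = ∏ i ∈ Finset.range n, f (i + 1) := by
  induction n with
  | zero => simp
  | succ n ih => rw [Finset.prod_Icc_succ_top (by omega), ih, Finset.prod_range_succ]

lemma one_sub_exp_le {q : ℝ} (hq0 : 0 < q) (hq1 : q < 1) (x : ℝ) (hx0 : 0 ≤ x) (hxq : x ≤ q) :
    Real.exp (-(x / (1 - q))) ≤ 1 - x := by
  have h1 : (0:ℝ) < 1 - q := by linarith
  set t := x / (1 - q) with ht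
  have hxt : x = t * (1 - q) := by rw [ht, div_mul_cancel₀ x h1.ne']
  have ht0 : 0 ≤ t := div_nonneg hx0 h1.le
  have h2 : 1 ≤ (1 - x) * Real.exp t := by
    have h3 := Real.add_one_le_exp t
    nlinarith [Real.exp_pos t]
  rw [Real.exp_neg, inv_le_iff_one_le_mul₀ (Real.exp_pos t)]
  linarith [h2]

/-- the uniform lower bound for the q-Pochhammer products -/
def E (q : ℝ) : ℝ := Real.exp (-(q / (1 - q) ^ 2))

lemma E_pos {q : ℝ} : 0 < E q := Real.exp_pos _

lemma E_le_one {q : ℝ} (hq0 : 0 < q) : E q ≤ 1 := by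
  have h : 0 ≤ q / (1 - q) ^ 2 := div_nonneg hq0.le (sq_nonneg _)
  calc E q ≤ Real.exp 0 := Real.exp_le_exp.mpr (by linarith)
    _ = 1 := Real.exp_zero

lemma sum_geom_Icc_le {q : ℝ} (hq0 : 0 < q) (hq1 : q < 1) (n : ℕ) :
    ∑ k ∈ Finset.Icc 1 n, q ^ k ≤ q / (1 - q) := by
  have h1 : (0:ℝ) < 1 - q := by linarith
  have key : ∀ n : ℕ, ∑ k ∈ Finset.Icc 1 n, q ^ k ≤ q / (1 - q) - q ^ (n + 1) / (1 - q) := by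
    intro n
    induction n with
    | zero => simp [pow_succ]
    | succ n ih =>
      rw [Finset.sum_Icc_succ_top (by omega)]
      have h2 : q ^ (n+1) / (1-q) - q ^ (n + 1 + 1) / (1-q) = q ^ (n+1) := by
        field_simp; ring
      linarith
  have h3 : 0 < q ^ (n+1) / (1 - q) := by positivity
  linarith [key n]

lemma prod_one_sub_ge {q : ℝ} (hq0 : 0 < q) (hq1 : q < 1) (n : ℕ) :
    E q ≤ ∏ k ∈ Finset.Icc 1 n, (1 - q ^ k) := by
  have h1 : (0:ℝ) < 1 - q := by linarith
  have step : ∀ k ∈ Finset.Icc 1 n, Real.exp (-(q ^ k / (1 - q))) ≤ 1 - q ^ k := by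
    intro k hk
    rcases Finset.mem_Icc.mp hk with ⟨hk1, _⟩
    exact one_sub_exp_le hq0 hq1 _ (pow_nonneg hq0.le _)
      (by simpa using pow_le_pow_of_le_one hq0.le hq1.le hk1)
  calc E q ≤ ∏ k ∈ Finset.Icc 1 n, Real.exp (-(q ^ k / (1 - q))) := by
        rw [← Real.exp_sum]
        apply Real.exp_le_exp.mpr
        have hsum : ∑ k ∈ Finset.Icc 1 n, -(q ^ k / (1 - q))
            = -((∑ k ∈ Finset.Icc 1 n, q ^ k) / (1 - q)) := by
          rw [Finset.sum_neg_distrib, ← Finset.sum_div]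
        have hs := sum_geom_Icc_le hq0 hq1 n
        show -(q / (1 - q) ^ 2) ≤ _
        rw [hsum, neg_le_neg_iff, div_le_div_iff₀ h1 (by positivity)]
        have h4 := mul_le_mul_of_nonneg_right hs (sq_nonneg (1 - q))
        have h5 : q / (1 - q) * (1 - q) ^ 2 = q * (1 - q) := by field_simp
        linarith
    _ ≤ _ := Finset.prod_le_prod (fun k _ => (Real.exp_pos _).le) step

lemma prod_one_sub_pos {q : ℝ} (hq0 : 0 < q) (hq1 : q < 1) (n : ℕ) :
    0 < ∏ k ∈ Finset.Icc 1 n, (1 - q ^ k) :=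
  lt_of_lt_of_le E_pos (prod_one_sub_ge hq0 hq1 n)

lemma denom_eq (q : ℝ) (n : ℕ) :
    ∏ j ∈ Finset.Icc 1 n, (1 - (q : ℂ) ^ j) = ((∏ j ∈ Finset.Icc 1 n, (1 - q ^ j) : ℝ) : ℂ) := by
  push_cast
  rfl

lemma norm_denom_ge {q : ℝ} (hq0 : 0 < q) (hq1 : q < 1) (n : ℕ) :
    E q ≤ ‖∏ j ∈ Finset.Icc 1 n, (1 - (q : ℂ) ^ j)‖ := by
  rw [denom_eq, Complex.norm_real, Real.norm_eq_abs,
    abs_of_pos (prod_one_sub_pos hq0 hq1 n)]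
  exact prod_one_sub_ge hq0 hq1 n

lemma coeff_bound {q : ℝ} (hq0 : 0 < q) (hq1 : q < 1) (n j : ℕ) :
    ‖∏ i ∈ Finset.range j, (1 - (q : ℂ) ^ (n - i)) / (1 - (q : ℂ) ^ (i + 1))‖ ≤ (E q)⁻¹ := by
  have h1 : (0:ℝ) < 1 - q := by linarith
  have heq : ∏ i ∈ Finset.range j, (1 - (q : ℂ) ^ (n - i)) / (1 - (q : ℂ) ^ (i + 1))
      = ((∏ i ∈ Finset.range j, (1 - q ^ (n - i)) / (1 - q ^ (i + 1)) : ℝ) : ℂ) := by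
    push_cast; rfl
  rw [heq, Complex.norm_real, Real.norm_eq_abs]
  have hden : ∀ i : ℕ, 0 < 1 - q ^ (i + 1) := fun i => by
    have : q ^ (i+1) < 1 := pow_lt_one₀ hq0.le hq1 (by omega)
    linarith
  have hnum : ∀ k : ℕ, 0 ≤ 1 - q ^ k ∧ 1 - q ^ k ≤ 1 := fun k => by
    constructor
    · have : q ^ k ≤ 1 := pow_le_one₀ hq0.le hq1.le
      linarith
    · have : 0 ≤ q ^ k := pow_nonneg hq0.le k
      linarith
  rw [abs_of_nonneg (Finset.prod_nonneg fun i _ =>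
    div_nonneg (hnum _).1 (hden i).le)]
  calc ∏ i ∈ Finset.range j, (1 - q ^ (n - i)) / (1 - q ^ (i + 1))
      ≤ ∏ i ∈ Finset.range j, (1 - q ^ (i + 1))⁻¹ := by
        apply Finset.prod_le_prod (fun i _ => div_nonneg (hnum _).1 (hden i).le)
        intro i _
        rw [← one_div]
        exact div_le_div₀ zero_le_one (hnum _).2 (hden i) le_rfl
    _ = (∏ i ∈ Finset.range j, (1 - q ^ (i + 1)))⁻¹ := by
        rw [← Finset.prod_inv_distrib]
    _ ≤ (E q)⁻¹ := by
        apply inv_anti₀ E_pos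
        rw [← prod_Icc_one (fun k => 1 - q ^ k) j]
        exact prod_one_sub_ge hq0 hq1 j

end WhitAux

namespace WhitAux

lemma msym_mul (u L : ℂ) (hu : u ≠ 0) {r n : ℕ} (hr : r ≤ n) (hr0 : r ≠ 0) :
    u ^ n * Msym r (L * u) = L ^ r * u ^ (n + r) + L⁻¹ ^ r * u ^ (n - r) := by
  rw [Msym, if_neg hr0, mul_inv, mul_pow, mul_pow, inv_pow, inv_pow,
    pow_sub₀ u hu hr, pow_add, mul_add]
  ring

lemma tendsto_cpow (c : ℂ) (hc1 : ‖c‖ < 1) {k : ℕ} (hk : k ≠ 0) :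
    Filter.Tendsto (fun m : ℕ => (c ^ m) ^ k) atTop (nhds 0) := by
  have h : ∀ m : ℕ, (c ^ m) ^ k = (c ^ k) ^ m := fun m => pow_right_comm c m k
  simp_rw [h]
  apply tendsto_pow_atTop_nhds_zero_of_norm_lt_one
  rw [norm_pow]
  exact pow_lt_one₀ (norm_nonneg c) hc1 hk

lemma tendsto_msym_lt (c L : ℂ) (hc0 : c ≠ 0) (hc1 : ‖c‖ < 1) {r n : ℕ} (hrn : r < n) :
    Filter.Tendsto (fun m : ℕ => (c ^ m) ^ n * Msym r (L * c ^ m)) atTop (nhds 0) := by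
  rcases eq_or_ne r 0 with rfl | hr0
  · simp only [Msym, if_true, eq_self_iff_true, mul_one]
    exact tendsto_cpow c hc1 (k := n) (by omega)
  · have heq : ∀ m : ℕ, (c ^ m) ^ n * Msym r (L * c ^ m)
        = L ^ r * ((c ^ m) ^ (n + r)) + L⁻¹ ^ r * ((c ^ m) ^ (n - r)) :=
      fun m => msym_mul (c ^ m) L (pow_ne_zero m hc0) hrn.le hr0
    simp_rw [heq]
    have h1 := (tendsto_cpow c hc1 (k := n + r) (by omega)).const_mul (L ^ r)
    have h2 := (tendsto_cpow c hc1 (k := n - r) (by omega)).const_mul (L⁻¹ ^ r)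
    simpa using h1.add h2

lemma pbar_expand (q : ℝ) (c L : ℂ) (n m : ℕ) :
    (c ^ m) ^ n * PbarA1 q n (L * c ^ m)
      = ((c ^ m) ^ n * Msym n (L * c ^ m))
        + ∑ j ∈ Finset.Icc 1 (n / 2),
            (∏ i ∈ Finset.range j, (1 - (q : ℂ) ^ (n - i)) / (1 - (q : ℂ) ^ (i + 1))) *
              ((c ^ m) ^ n * Msym (n - 2 * j) (L * c ^ m)) := by
  rw [PbarA1, mul_add, Finset.mul_sum]
  congr 1
  apply Finset.sum_congr rfl
  intro j _
  ring

lemma tendsto_pbar (q : ℝ) (c L : ℂ) (hc0 : c ≠ 0) (hc1 : ‖c‖ < 1) (n : ℕ) :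
    Filter.Tendsto (fun m : ℕ => (c ^ m) ^ n * PbarA1 q n (L * c ^ m)) atTop
      (nhds (L⁻¹ ^ n)) := by
  rcases eq_or_ne n 0 with rfl | hn0
  · simp only [pow_zero, one_mul, PbarA1, Msym, if_pos rfl, Nat.zero_div,
      Finset.Icc_self, Finset.Icc_eq_empty_of_lt (by norm_num : (1:ℕ) > 0)]
    simpa using tendsto_const_nhds
  · simp_rw [pbar_expand q c L n]
    have hmain : Filter.Tendsto (fun m : ℕ => (c ^ m) ^ n * Msym n (L * c ^ m)) atTop
        (nhds (L⁻¹ ^ n)) := by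
      have heq2 : ∀ m : ℕ, (c ^ m) ^ n * Msym n (L * c ^ m)
          = L ^ n * ((c ^ m) ^ (n + n)) + L⁻¹ ^ n * ((c ^ m) ^ (n - n)) :=
        fun m => msym_mul (c ^ m) L (pow_ne_zero m hc0) le_rfl hn0
      simp_rw [heq2, Nat.sub_self, pow_zero, mul_one]
      have h1 := (tendsto_cpow c hc1 (k := n + n) (by omega)).const_mul (L ^ n)
      simpa using h1.add tendsto_const_nhds
    have hsum : Filter.Tendsto
        (fun m : ℕ => ∑ j ∈ Finset.Icc 1 (n / 2),
          (∏ i ∈ Finset.range j, (1 - (q : ℂ) ^ (n - i)) / (1 - (q : ℂ) ^ (i + 1))) *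
            ((c ^ m) ^ n * Msym (n - 2 * j) (L * c ^ m))) atTop (nhds 0) := by
      have := tendsto_finset_sum (Finset.Icc 1 (n / 2))
        (fun j hj => (tendsto_msym_lt c L hc0 hc1
          (show n - 2 * j < n by
            rcases Finset.mem_Icc.mp hj with ⟨h1, h2⟩; omega)).const_mul
          (∏ i ∈ Finset.range j, (1 - (q : ℂ) ^ (n - i)) / (1 - (q : ℂ) ^ (i + 1))))
      simpa using this
    simpa using hmain.add hsum

lemma norm_msym_le (c L : ℂ) (hc0 : c ≠ 0) (hc1 : ‖c‖ ≤ 1) {r n : ℕ} (hr : r ≤ n) (m : ℕ) :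
    ‖(c ^ m) ^ n * Msym r (L * c ^ m)‖ ≤ 2 * (max (max ‖L‖ ‖L‖⁻¹) 1) ^ n := by
  set B := max (max ‖L‖ ‖L‖⁻¹) 1 with hB
  have hB1 : (1:ℝ) ≤ B := le_max_right _ _
  have hBn : (1:ℝ) ≤ B ^ n := one_le_pow₀ hB1
  have hcm : ∀ k : ℕ, ‖(c ^ m) ^ k‖ ≤ 1 := fun k => by
    rw [norm_pow, norm_pow]
    exact pow_le_one₀ (pow_nonneg (norm_nonneg c) m) (pow_le_one₀ (norm_nonneg c) hc1)
  rcases eq_or_ne r 0 with rfl | hr0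
  · rw [Msym, if_pos rfl, mul_one]
    have := hcm n
    linarith
  · rw [msym_mul (c ^ m) L (pow_ne_zero m hc0) hr hr0]
    have hLr : ‖L‖ ^ r ≤ B ^ n :=
      le_trans (pow_le_pow_left₀ (norm_nonneg _) ((le_max_left _ _).trans (le_max_left _ _)) r)
        (pow_le_pow_right₀ hB1 hr)
    have hLr' : ‖L‖⁻¹ ^ r ≤ B ^ n :=
      le_trans (pow_le_pow_left₀ (inv_nonneg.mpr (norm_nonneg _))
        ((le_max_right _ _).trans (le_max_left _ _)) r) (pow_le_pow_right₀ hB1 hr)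
    calc ‖L ^ r * (c ^ m) ^ (n + r) + L⁻¹ ^ r * (c ^ m) ^ (n - r)‖
        ≤ ‖L ^ r * (c ^ m) ^ (n + r)‖ + ‖L⁻¹ ^ r * (c ^ m) ^ (n - r)‖ := norm_add_le _ _
      _ = ‖L‖ ^ r * ‖(c ^ m) ^ (n + r)‖ + ‖L‖⁻¹ ^ r * ‖(c ^ m) ^ (n - r)‖ := by
          simp [norm_mul, norm_pow, norm_inv]
      _ ≤ ‖L‖ ^ r * 1 + ‖L‖⁻¹ ^ r * 1 := by
          gcongr
          · exact hcm (n + r)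
          · exact hcm (n - r)
      _ ≤ 2 * B ^ n := by rw [mul_one, mul_one]; linarith

lemma norm_pbar_le {q : ℝ} (hq0 : 0 < q) (hq1 : q < 1) (c L : ℂ) (hc0 : c ≠ 0)
    (hc1 : ‖c‖ ≤ 1) (n m : ℕ) :
    ‖(c ^ m) ^ n * PbarA1 q n (L * c ^ m)‖
      ≤ (1 + n * (E q)⁻¹) * (2 * (max (max ‖L‖ ‖L‖⁻¹) 1) ^ n) := by
  set B := max (max ‖L‖ ‖L‖⁻¹) 1 with hB
  rw [pbar_expand q c L n m]
  have h1 : ‖(c ^ m) ^ n * Msym n (L * c ^ m)‖ ≤ 2 * B ^ n :=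
    norm_msym_le c L hc0 hc1 le_rfl m
  have h2 : ‖∑ j ∈ Finset.Icc 1 (n / 2),
      (∏ i ∈ Finset.range j, (1 - (q : ℂ) ^ (n - i)) / (1 - (q : ℂ) ^ (i + 1))) *
        ((c ^ m) ^ n * Msym (n - 2 * j) (L * c ^ m))‖
      ≤ n * ((E q)⁻¹ * (2 * B ^ n)) := by
    calc _ ≤ ∑ j ∈ Finset.Icc 1 (n / 2),
        ‖(∏ i ∈ Finset.range j, (1 - (q : ℂ) ^ (n - i)) / (1 - (q : ℂ) ^ (i + 1))) *
          ((c ^ m) ^ n * Msym (n - 2 * j) (L * c ^ m))‖ := norm_sum_le _ _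
      _ ≤ ∑ j ∈ Finset.Icc 1 (n / 2), (E q)⁻¹ * (2 * B ^ n) := by
          apply Finset.sum_le_sum
          intro j hj
          rw [norm_mul]
          apply mul_le_mul (coeff_bound hq0 hq1 n j)
            (norm_msym_le c L hc0 hc1 (by omega) m) (norm_nonneg _)
            (inv_nonneg.mpr E_pos.le)
      _ = ((n / 2 : ℕ) : ℝ) * ((E q)⁻¹ * (2 * B ^ n)) := by
          rw [Finset.sum_const, Nat.card_Icc]
          simp [nsmul_eq_mul]
      _ ≤ n * ((E q)⁻¹ * (2 * B ^ n)) := by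
          have hB1 : (1:ℝ) ≤ B := le_max_right _ _
          have hBn : (0:ℝ) ≤ (E q)⁻¹ * (2 * B ^ n) :=
            mul_nonneg (inv_nonneg.mpr E_pos.le)
              (mul_nonneg (by norm_num) (pow_nonneg (by linarith) n))
          have : ((n / 2 : ℕ) : ℝ) ≤ (n : ℝ) := by
            exact_mod_cast Nat.div_le_self n 2
          exact mul_le_mul_of_nonneg_right this hBn
  calc _ ≤ ‖(c ^ m) ^ n * Msym n (L * c ^ m)‖ + ‖∑ j ∈ Finset.Icc 1 (n / 2),
        (∏ i ∈ Finset.range j, (1 - (q : ℂ) ^ (n - i)) / (1 - (q : ℂ) ^ (i + 1))) *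
          ((c ^ m) ^ n * Msym (n - 2 * j) (L * c ^ m))‖ := norm_add_le _ _
    _ ≤ 2 * B ^ n + n * ((E q)⁻¹ * (2 * B ^ n)) := add_le_add h1 h2
    _ = (1 + n * (E q)⁻¹) * (2 * B ^ n) := by ring

lemma summable_gauss (q A : ℝ) (hq0 : 0 < q) (hq1 : q < 1) (hA : 0 < A) :
    Summable (fun n : ℕ => q ^ ((n : ℝ) ^ 2 / 4) * A ^ n * ((n : ℝ) + 1)) := by
  set f : ℕ → ℝ := fun n => q ^ ((n : ℝ) ^ 2 / 4) * A ^ n * ((n : ℝ) + 1) with hf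
  have hfpos : ∀ n, 0 < f n := fun n => by
    have := Real.rpow_pos_of_pos hq0 ((n : ℝ) ^ 2 / 4)
    positivity
  apply summable_of_ratio_test_tendsto_lt_one (l := 0) one_pos
    (Filter.Eventually.of_forall fun n => (hfpos n).ne')
  have key : ∀ n : ℕ, ‖f (n + 1)‖ / ‖f n‖ ≤ 2 * A * q ^ ((n : ℝ) / 2) := by
    intro n
    rw [Real.norm_of_nonneg (hfpos _).le, Real.norm_of_nonneg (hfpos _).le,
      div_le_iff₀ (hfpos n)]
    have e1 : q ^ (((n + 1 : ℕ) : ℝ) ^ 2 / 4) ≤ q ^ ((n : ℝ) ^ 2 / 4 + (n : ℝ) / 2) := by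
      apply Real.rpow_le_rpow_of_exponent_ge hq0 hq1.le
      push_cast
      nlinarith [sq_nonneg ((n : ℝ))]
    have e2 : q ^ ((n : ℝ) ^ 2 / 4 + (n : ℝ) / 2)
        = q ^ ((n : ℝ) ^ 2 / 4) * q ^ ((n : ℝ) / 2) := Real.rpow_add hq0 _ _
    have hq4 : (0:ℝ) < q ^ ((n : ℝ) ^ 2 / 4) := Real.rpow_pos_of_pos hq0 _
    have hq2 : (0:ℝ) < q ^ ((n : ℝ) / 2) := Real.rpow_pos_of_pos hq0 _
    have hq14 : (0:ℝ) < q ^ (((n + 1 : ℕ) : ℝ) ^ 2 / 4) := Real.rpow_pos_of_pos hq0 _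
    calc f (n + 1) = q ^ (((n + 1 : ℕ) : ℝ) ^ 2 / 4) * A ^ (n + 1) * ((n : ℝ) + 2) := by
          rw [hf]; push_cast; ring
      _ ≤ q ^ ((n : ℝ) ^ 2 / 4) * q ^ ((n : ℝ) / 2) * A ^ (n + 1) * ((n : ℝ) + 2) := by
          rw [← e2]
          gcongr
      _ ≤ 2 * A * q ^ ((n : ℝ) / 2) * f n := by
          rw [hf]
          have hAn : (0:ℝ) < A ^ n := pow_pos hA n
          have hn2 : ((n : ℝ) + 2) ≤ 2 * ((n : ℝ) + 1) := by
            have : (0:ℝ) ≤ (n : ℝ) := n.cast_nonneg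
            linarith
          calc q ^ ((n : ℝ) ^ 2 / 4) * q ^ ((n : ℝ) / 2) * A ^ (n + 1) * ((n : ℝ) + 2)
              ≤ q ^ ((n : ℝ) ^ 2 / 4) * q ^ ((n : ℝ) / 2) * A ^ (n + 1)
                * (2 * ((n : ℝ) + 1)) := by gcongr
            _ = 2 * A * q ^ ((n : ℝ) / 2) * (q ^ ((n : ℝ) ^ 2 / 4) * A ^ n * ((n : ℝ) + 1)) := by
                rw [pow_succ]; ring
  apply squeeze_zero (fun n => div_nonneg (norm_nonneg _) (norm_nonneg _)) key
  have hpow : Filter.Tendsto (fun n : ℕ => q ^ ((n : ℝ) / 2)) atTop (nhds 0) := by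
    have hrwq : ∀ n : ℕ, q ^ ((n : ℝ) / 2) = (q ^ ((1 : ℝ) / 2)) ^ n := by
      intro n
      rw [← Real.rpow_natCast (q ^ ((1 : ℝ) / 2)) n, ← Real.rpow_mul hq0.le]
      congr 1
      ring
    simp_rw [hrwq]
    exact tendsto_pow_atTop_nhds_zero_of_lt_one (Real.rpow_nonneg hq0.le _)
      (Real.rpow_lt_one hq0.le hq1 (by norm_num))
  simpa using hpow.const_mul (2 * A)

end WhitAux

/-- in the extreme Whittaker limit, the global q-Whittaker function
degenerates to the quadratic q-exponential series in X/Λ. -/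
theorem whitA1_extreme_limit (q : ℝ) (hq0 : 0 < q) (hq1 : q < 1)
    (X Λ : ℂ) (hX : X ≠ 0) (hΛ : Λ ≠ 0) :
    Filter.Tendsto (fun m : ℕ =>
        whitA1 q (X * ((q ^ ((m : ℝ) / 2) : ℝ) : ℂ)) (Λ * ((q ^ ((m : ℝ) / 2) : ℝ) : ℂ)))
      Filter.atTop
      (nhds (∑' n : ℕ, ((q ^ ((n : ℝ) ^ 2 / 4) : ℝ) : ℂ) * (X / Λ) ^ n /
        ∏ j ∈ Finset.Icc 1 n, (1 - (q : ℂ) ^ j))) := by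
  open WhitAux in
  set c : ℂ := ((q ^ ((1 : ℝ) / 2) : ℝ) : ℂ) with hc
  have hs0 : (0 : ℝ) < q ^ ((1 : ℝ) / 2) := Real.rpow_pos_of_pos hq0 _
  have hc0 : c ≠ 0 := by
    rw [hc]
    exact_mod_cast hs0.ne'
  have hnc : ‖c‖ = q ^ ((1 : ℝ) / 2) := by
    rw [hc, Complex.norm_real, Real.norm_of_nonneg hs0.le]
  have hc1 : ‖c‖ < 1 := by
    rw [hnc]; exact Real.rpow_lt_one hq0.le hq1 (by norm_num)
  have hrwc : ∀ m : ℕ, ((q ^ ((m : ℝ) / 2) : ℝ) : ℂ) = c ^ m := by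
    intro m
    rw [hc, ← Complex.ofReal_pow]
    congr 1
    rw [← Real.rpow_natCast (q ^ ((1 : ℝ) / 2)) m, ← Real.rpow_mul hq0.le]
    congr 1
    ring
  simp only [hrwc, whitA1]
  set B : ℝ := max (max ‖Λ‖ ‖Λ‖⁻¹) 1 with hB
  have hB1 : (1 : ℝ) ≤ B := le_max_right _ _
  have hXpos : (0 : ℝ) < ‖X‖ := norm_pos_iff.mpr hX
  have hE1 : (1 : ℝ) ≤ (E q)⁻¹ := by
    rw [le_inv_comm₀ one_pos E_pos]
    simpa using E_le_one hq0
  set bound : ℕ → ℝ := fun n =>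
    q ^ ((n : ℝ) ^ 2 / 4) * (‖X‖ ^ n * ((1 + n * (E q)⁻¹) * (2 * B ^ n))) / E q with hbound
  apply tendsto_tsum_of_dominated_convergence (bound := bound)
  · -- summability of the bound
    apply Summable.of_nonneg_of_le
    · intro n
      rw [hbound]
      have h1 : (0:ℝ) < q ^ ((n : ℝ) ^ 2 / 4) := Real.rpow_pos_of_pos hq0 _
      have h2 : (0:ℝ) ≤ B ^ n := pow_nonneg (by linarith) n
      have h3 : (0:ℝ) ≤ 1 + n * (E q)⁻¹ := by
        have : (0:ℝ) ≤ (n : ℝ) := n.cast_nonneg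
        nlinarith
      have := E_pos (q := q)
      positivity
    · intro n
      show bound n ≤ 2 * (E q)⁻¹ * (E q)⁻¹ * (q ^ ((n : ℝ) ^ 2 / 4) * (‖X‖ * B) ^ n * ((n : ℝ) + 1))
      have h1 : (0:ℝ) < q ^ ((n : ℝ) ^ 2 / 4) := Real.rpow_pos_of_pos hq0 _
      have h2 : (0:ℝ) ≤ B ^ n := pow_nonneg (by linarith) n
      have hkey : 1 + (n : ℝ) * (E q)⁻¹ ≤ (E q)⁻¹ * ((n : ℝ) + 1) := by
        have : (0:ℝ) ≤ (n : ℝ) := n.cast_nonneg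
        nlinarith
      calc bound n
          = 2 * (E q)⁻¹ * (q ^ ((n : ℝ) ^ 2 / 4) * (‖X‖ ^ n * B ^ n) * (1 + n * (E q)⁻¹)) := by
            rw [hbound, div_eq_mul_inv]; ring
        _ ≤ 2 * (E q)⁻¹ * (q ^ ((n : ℝ) ^ 2 / 4) * (‖X‖ ^ n * B ^ n) * ((E q)⁻¹ * ((n : ℝ) + 1))) := by
            have hnn : (0:ℝ) ≤ 2 * (E q)⁻¹ * (q ^ ((n : ℝ) ^ 2 / 4) * (‖X‖ ^ n * B ^ n)) := by
              have := E_pos (q := q)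
              positivity
            calc 2 * (E q)⁻¹ * (q ^ ((n : ℝ) ^ 2 / 4) * (‖X‖ ^ n * B ^ n) * (1 + n * (E q)⁻¹))
                = 2 * (E q)⁻¹ * (q ^ ((n : ℝ) ^ 2 / 4) * (‖X‖ ^ n * B ^ n)) * (1 + n * (E q)⁻¹) := by
                  ring
              _ ≤ 2 * (E q)⁻¹ * (q ^ ((n : ℝ) ^ 2 / 4) * (‖X‖ ^ n * B ^ n)) * ((E q)⁻¹ * ((n : ℝ) + 1)) :=
                  mul_le_mul_of_nonneg_left hkey hnn
              _ = _ := by ring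
        _ = 2 * (E q)⁻¹ * (E q)⁻¹ * (q ^ ((n : ℝ) ^ 2 / 4) * (‖X‖ * B) ^ n * ((n : ℝ) + 1)) := by
            rw [mul_pow]; ring
    · exact (summable_gauss q (‖X‖ * B) hq0 hq1 (by nlinarith)).mul_left
        (2 * (E q)⁻¹ * (E q)⁻¹)
  · -- pointwise convergence
    intro n
    have hfun : (fun m : ℕ => ((q ^ ((n : ℝ) ^ 2 / 4) : ℝ) : ℂ) * (X * c ^ m) ^ n *
          PbarA1 q n (Λ * c ^ m) / ∏ j ∈ Finset.Icc 1 n, (1 - (q : ℂ) ^ j))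
        = fun m : ℕ => (((q ^ ((n : ℝ) ^ 2 / 4) : ℝ) : ℂ) * X ^ n) *
          ((c ^ m) ^ n * PbarA1 q n (Λ * c ^ m)) / ∏ j ∈ Finset.Icc 1 n, (1 - (q : ℂ) ^ j) := by
      funext m; ring
    rw [hfun]
    have hlim : ((q ^ ((n : ℝ) ^ 2 / 4) : ℝ) : ℂ) * (X / Λ) ^ n /
          ∏ j ∈ Finset.Icc 1 n, (1 - (q : ℂ) ^ j)
        = (((q ^ ((n : ℝ) ^ 2 / 4) : ℝ) : ℂ) * X ^ n) * (Λ⁻¹ ^ n) /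
          ∏ j ∈ Finset.Icc 1 n, (1 - (q : ℂ) ^ j) := by
      rw [div_eq_mul_inv X Λ, mul_pow]; ring
    rw [hlim]
    exact ((tendsto_pbar q c Λ hc0 hc1 n).const_mul _).div_const _
  · -- uniform bound
    apply Filter.Eventually.of_forall
    intro m n
    have heq : ((q ^ ((n : ℝ) ^ 2 / 4) : ℝ) : ℂ) * (X * c ^ m) ^ n * PbarA1 q n (Λ * c ^ m) /
          ∏ j ∈ Finset.Icc 1 n, (1 - (q : ℂ) ^ j)
        = ((q ^ ((n : ℝ) ^ 2 / 4) : ℝ) : ℂ) * (X ^ n * ((c ^ m) ^ n * PbarA1 q n (Λ * c ^ m))) /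
          ∏ j ∈ Finset.Icc 1 n, (1 - (q : ℂ) ^ j) := by
      ring
    rw [heq, norm_div, norm_mul, norm_mul, norm_pow, Complex.norm_real,
      Real.norm_of_nonneg (Real.rpow_pos_of_pos hq0 _).le, hbound]
    apply div_le_div₀ (by
        have h1 : (0:ℝ) < q ^ ((n : ℝ) ^ 2 / 4) := Real.rpow_pos_of_pos hq0 _
        have h2 : (0:ℝ) ≤ B ^ n := pow_nonneg (by linarith) n
        have h3 : (0:ℝ) ≤ 1 + n * (E q)⁻¹ := by
          have h4 : (0:ℝ) ≤ (n : ℝ) := n.cast_nonneg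
          nlinarith
        positivity)
      ?_ E_pos (norm_denom_ge hq0 hq1 n)
    apply mul_le_mul_of_nonneg_left _ (Real.rpow_pos_of_pos hq0 _).le
    exact mul_le_mul_of_nonneg_left
      (norm_pbar_le hq0 hq1 c Λ hc0 hc1.le n m) (pow_nonneg (norm_nonneg X) n)


end
end

section
/- Fix a real number q with 0 < q < 1 and a complex number s with 0 < |s| < 1, and set t = s². For all integers m, n ≥ 0, the duality formula for the symmetric Macdonald polynomials of type A₁ holds: P_m(s q^{n/2}; q, t) · P_n(s; q, t) = P_n(s q^{m/2}; q, t) · P_m(s; q, t). (Formula (2.31) of the paper in the rank-one case.) -/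
open scoped BigOperators
open Filter

noncomputable section

namespace RogersAux

/-- single factor of the coefficient product -/
def rp (q : ℝ) (t : ℂ) (n i : ℕ) : ℂ :=
  ((1 - (q : ℂ) ^ (n - i)) * (1 - t * (q : ℂ) ^ i)) /
      ((1 - (q : ℂ) ^ (1 + i)) * (1 - t * (q : ℂ) ^ (n - i - 1)))

/-- coefficient -/
def ee (q : ℝ) (t : ℂ) (n k : ℕ) : ℂ := ∏ i ∈ Finset.range k, rp q t n i

/-- unfolded Rogers polynomial -/
def Pu (q : ℝ) (t : ℂ) (n : ℕ) (X : ℂ) : ℂ :=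
  ∑ k ∈ Finset.range (n + 1), ee q t n k * (X ^ (n - k) * X⁻¹ ^ k)

section basic

variable {q : ℝ} {t : ℂ} (hq0 : 0 < q) (hq1 : q < 1) (ht : ‖t‖ < 1)

lemma one_sub_ne_s17 {z : ℂ} (hz : ‖z‖ < 1) : (1 : ℂ) - z ≠ 0 := by
  intro h
  have : z = 1 := by linear_combination -h
  rw [this] at hz; simp at hz

include hq0 hq1 in
lemma hq_ne {e : ℕ} (he : 1 ≤ e) : (1 : ℂ) - (q : ℂ) ^ e ≠ 0 := by
  apply one_sub_ne_s17
  rw [norm_pow, Complex.norm_real, Real.norm_eq_abs, abs_of_pos hq0]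
  exact pow_lt_one₀ hq0.le hq1 (by omega)

include hq0 hq1 ht in
lemma ht_ne (e : ℕ) : (1 : ℂ) - t * (q : ℂ) ^ e ≠ 0 := by
  apply one_sub_ne_s17
  rw [norm_mul, norm_pow, Complex.norm_real, Real.norm_eq_abs, abs_of_pos hq0]
  calc ‖t‖ * q ^ e ≤ ‖t‖ * 1 := by
        apply mul_le_mul_of_nonneg_left _ (norm_nonneg t)
        exact pow_le_one₀ hq0.le hq1.le
    _ < 1 := by rwa [mul_one]

include hq0 hq1 ht in
lemma rp_ne {n i : ℕ} (hi : i < n) : rp q t n i ≠ 0 := by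
  apply div_ne_zero
  · exact mul_ne_zero (hq_ne hq0 hq1 (by omega)) (ht_ne hq0 hq1 ht i)
  · exact mul_ne_zero (hq_ne hq0 hq1 (by omega)) (ht_ne hq0 hq1 ht _)

include hq0 hq1 ht in
lemma ee_ne {n k : ℕ} (hk : k ≤ n) : ee q t n k ≠ 0 := by
  apply Finset.prod_ne_zero_iff.2
  intro i hi
  exact rp_ne hq0 hq1 ht (by simp at hi; omega)

lemma rp_reflect {n i : ℕ} (hi : i < n) : rp q t n (n - 1 - i) = (rp q t n i)⁻¹ := by
  have h1 : n - (n - 1 - i) = i + 1 := by omega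
  have h2 : 1 + (n - 1 - i) = n - i := by omega
  have h3 : i + 1 - 1 = i := by omega
  have h4 : n - 1 - i = n - i - 1 := by omega
  rw [rp, rp, h1, h2, h3, h4, inv_div, add_comm 1 i]

include hq0 hq1 ht in
lemma ee_nn (n : ℕ) : ee q t n n = 1 := by
  have h1 : ∏ i ∈ Finset.range n, ((1:ℂ) - (q:ℂ) ^ (n - i)) =
      ∏ i ∈ Finset.range n, ((1:ℂ) - (q:ℂ) ^ (1 + i)) := by
    rw [← Finset.prod_range_reflect]
    apply Finset.prod_congr rfl
    intro i hi
    simp only [Finset.mem_range] at hi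
    congr 2
    omega
  have h2 : ∏ i ∈ Finset.range n, ((1:ℂ) - t * (q:ℂ) ^ i) =
      ∏ i ∈ Finset.range n, ((1:ℂ) - t * (q:ℂ) ^ (n - i - 1)) := by
    rw [← Finset.prod_range_reflect]
    apply Finset.prod_congr rfl
    intro i hi
    simp only [Finset.mem_range] at hi
    congr 3
    omega
  rw [ee]
  simp only [rp]
  rw [Finset.prod_div_distrib, Finset.prod_mul_distrib, Finset.prod_mul_distrib, h1, h2]
  apply div_self
  apply mul_ne_zero
  · exact Finset.prod_ne_zero_iff.2 fun i _ => hq_ne hq0 hq1 (by omega)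
  · exact Finset.prod_ne_zero_iff.2 fun i _ => ht_ne hq0 hq1 ht _

include hq0 hq1 ht in
lemma ee_symm {n k : ℕ} (hk : k ≤ n) : ee q t n (n - k) = ee q t n k := by
  have hsplit : ee q t n n = ee q t n (n - k) * ∏ i ∈ Finset.range k, rp q t n (n - k + i) := by
    have hn : Finset.range n = Finset.range ((n - k) + k) := by congr 1; omega
    rw [ee, hn, Finset.prod_range_add, ee]
  have hrefl : ∏ i ∈ Finset.range k, rp q t n (n - k + i) = (ee q t n k)⁻¹ := by
    rw [← Finset.prod_range_reflect]
    have : ∀ i ∈ Finset.range k, rp q t n (n - k + (k - 1 - i)) = (rp q t n i)⁻¹ := by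
      intro i hi
      simp only [Finset.mem_range] at hi
      have : n - k + (k - 1 - i) = n - 1 - i := by omega
      rw [this, rp_reflect (by omega)]
    rw [Finset.prod_congr rfl this, ee, Finset.prod_inv_distrib]
  rw [ee_nn hq0 hq1 ht, hrefl] at hsplit
  have h2 := ee_ne hq0 hq1 ht hk
  field_simp at hsplit
  exact hsplit.symm

include hq0 hq1 ht in
lemma rogers_eq_Pu (n : ℕ) {X : ℂ} (hX : X ≠ 0) : RogersA1 q t n X = Pu q t n X := by
  have hXpow : ∀ k : ℕ, X ^ k * X⁻¹ ^ k = 1 := by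
    intro k
    rw [inv_pow, mul_inv_cancel₀ (pow_ne_zero k hX)]
  have hA : ∀ k, 2 * k ≤ n → X ^ (n - k) * X⁻¹ ^ k = X ^ (n - 2 * k) := by
    intro k hk
    rw [show n - k = (n - 2 * k) + k by omega, pow_add, mul_assoc, hXpow, mul_one]
  have key : RogersA1 q t n X =
      ∑ j ∈ Finset.range (n / 2 + 1), ee q t n j * Msym (n - 2 * j) X := by
    rw [RogersA1, Finset.sum_range_succ', ← Finset.Ico_add_one_right_eq_Icc,
      Finset.sum_Ico_eq_sum_range]
    simp only [ee, rp, Nat.mul_zero, Nat.sub_zero, Finset.range_zero,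
      Finset.prod_empty, one_mul, Nat.add_sub_cancel]
    rw [add_comm]
    congr 1
    apply Finset.sum_congr rfl
    intro i _
    rw [add_comm 1 i]
  have hsplit : Pu q t n X =
      (∑ k ∈ Finset.range (n / 2 + 1), ee q t n k * (X ^ (n - k) * X⁻¹ ^ k)) +
      ∑ i ∈ Finset.range (n - n / 2), ee q t n (n - i) * (X ^ (n - (n - i)) * X⁻¹ ^ (n - i)) := by
    rw [Pu, show n + 1 = (n / 2 + 1) + (n - n / 2) by omega, Finset.sum_range_add]
    congr 1
    rw [← Finset.sum_range_reflect]
    apply Finset.sum_congr rfl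
    intro i hi
    simp only [Finset.mem_range] at hi
    rw [show n / 2 + 1 + (n - n / 2 - 1 - i) = n - i by omega]
  rw [key, hsplit]
  have hsec : ∀ i ∈ Finset.range (n - n / 2),
      ee q t n (n - i) * (X ^ (n - (n - i)) * X⁻¹ ^ (n - i))
      = ee q t n i * X⁻¹ ^ (n - 2 * i) := by
    intro i hi
    simp only [Finset.mem_range] at hi
    rw [show n - (n - i) = i by omega]
    have h1 : ee q t n (n - i) = ee q t n i := ee_symm hq0 hq1 ht (by omega)
    have h2 : X ^ i * X⁻¹ ^ (n - i) = X⁻¹ ^ (n - 2 * i) := by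
      rw [show n - i = (n - 2 * i) + i by omega, pow_add, mul_comm (X⁻¹ ^ (n - 2*i)),
        ← mul_assoc, hXpow, one_mul]
    rw [h1, h2]
  rw [Finset.sum_congr rfl hsec]
  have hfir : ∀ k ∈ Finset.range (n / 2 + 1),
      ee q t n k * (X ^ (n - k) * X⁻¹ ^ k) = ee q t n k * X ^ (n - 2 * k) := by
    intro k hk
    simp only [Finset.mem_range] at hk
    rw [hA k (by omega)]
  rw [Finset.sum_congr rfl hfir]
  rcases Nat.even_or_odd n with ⟨h, hn⟩ | ⟨h, hn⟩
  · -- n = h + h even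
    have hd : n / 2 = h := by omega
    have hd2 : n - n / 2 = h := by omega
    rw [hd, show n - h = h by omega, Finset.sum_range_succ, Finset.sum_range_succ
      (fun k => ee q t n k * X ^ (n - 2 * k))]
    have hm0 : Msym (n - 2 * h) X = 1 := by rw [show n - 2 * h = 0 by omega, Msym]; simp
    have hx0 : X ^ (n - 2 * h) = 1 := by rw [show n - 2 * h = 0 by omega, pow_zero]
    rw [hm0, hx0]
    have : ∀ j ∈ Finset.range h, ee q t n j * Msym (n - 2 * j) X =
        ee q t n j * X ^ (n - 2 * j) + ee q t n j * X⁻¹ ^ (n - 2 * j) := by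
      intro j hj
      simp only [Finset.mem_range] at hj
      rw [Msym, if_neg (by omega)]
      ring
    rw [Finset.sum_congr rfl this, Finset.sum_add_distrib]
    ring
  · -- n = 2h+1 odd
    have hd : n / 2 = h := by omega
    have hd2 : n - n / 2 = h + 1 := by omega
    rw [hd, show n - h = h + 1 by omega]
    have : ∀ j ∈ Finset.range (h + 1), ee q t n j * Msym (n - 2 * j) X =
        ee q t n j * X ^ (n - 2 * j) + ee q t n j * X⁻¹ ^ (n - 2 * j) := by
      intro j hj
      simp only [Finset.mem_range] at hj
      rw [Msym, if_neg (by omega)]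
      ring
    rw [Finset.sum_congr rfl this, Finset.sum_add_distrib]

set_option maxHeartbeats 1000000 in
include hq0 hq1 ht in
lemma rup (K d : ℕ) :
    ee q t (K + d + 1) K * ((1 - (q:ℂ) ^ (d + 1)) * (1 - t * (q:ℂ) ^ (K + d))) =
    ee q t (K + d) K * ((1 - (q:ℂ) ^ (K + d + 1)) * (1 - t * (q:ℂ) ^ d)) := by
  induction K generalizing d with
  | zero => simp [ee]
  | succ K IH =>
    have IH' := IH (d + 1)
    rw [show K + (d + 1) + 1 = K + 1 + d + 1 by omega, show K + (d + 1) = K + 1 + d by omega] at IH'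
    -- IH' : ee (K+1+d+1) K * ((1-q^(d+2))*(1-t q^(K+1+d))) = ee (K+1+d) K * ((1-q^(K+1+d+1))*(1-t q^(d+1)))
    have hne1 : (1 : ℂ) - (q:ℂ) ^ (d + 2) ≠ 0 := hq_ne hq0 hq1 (by omega)
    have hne2 : (1 : ℂ) - t * (q:ℂ) ^ (K + 1 + d) ≠ 0 := ht_ne hq0 hq1 ht _
    have hA : ee q t (K + 1 + d + 1) K =
        ee q t (K + 1 + d) K * ((1 - (q:ℂ) ^ (K + 1 + d + 1)) * (1 - t * (q:ℂ) ^ (d + 1))) /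
          ((1 - (q:ℂ) ^ (d + 2)) * (1 - t * (q:ℂ) ^ (K + 1 + d))) := by
      rw [eq_div_iff (mul_ne_zero hne1 hne2)]
      rw [show d + 1 + 1 = d + 2 by omega] at IH'
      linear_combination IH'
    have e1 : ee q t (K + 1 + d + 1) (K + 1) = ee q t (K + 1 + d + 1) K * rp q t (K + 1 + d + 1) K := by
      unfold ee; exact Finset.prod_range_succ _ _
    have e2 : ee q t (K + 1 + d) (K + 1) = ee q t (K + 1 + d) K * rp q t (K + 1 + d) K := by
      unfold ee; exact Finset.prod_range_succ _ _
    rw [e1, e2, hA, rp, rp]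
    rw [show K + 1 + d + 1 - K = d + 2 by omega, show d + 2 - 1 = d + 1 by omega,
      show K + 1 + d - K = d + 1 by omega, show d + 1 - 1 = d by omega]
    have hne3 : (1 : ℂ) - (q:ℂ) ^ (1 + K) ≠ 0 := hq_ne hq0 hq1 (by omega)
    have hne4 : (1 : ℂ) - t * (q:ℂ) ^ (d + 1) ≠ 0 := ht_ne hq0 hq1 ht _
    have hne5 : (1 : ℂ) - t * (q:ℂ) ^ d ≠ 0 := ht_ne hq0 hq1 ht _
    field_simp

/-- the recurrence coefficient `c_{n+1}` -/
def cc (q : ℝ) (t : ℂ) (n : ℕ) : ℂ :=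
  ((1 - (q:ℂ) ^ (n + 1)) * (1 - t ^ 2 * (q:ℂ) ^ n)) /
    ((1 - t * (q:ℂ) ^ n) * (1 - t * (q:ℂ) ^ (n + 1)))

set_option maxHeartbeats 1000000 in
include hq0 hq1 ht in
lemma coeff3 {n k : ℕ} (hk : k ≤ n) :
    ee q t (n + 1) (k + 1) + ee q t (n + 1) k =
    ee q t (n + 2) (k + 1) + cc q t n * ee q t n k := by
  obtain ⟨d, rfl⟩ : ∃ d, n = k + d := ⟨n - k, by omega⟩
  have h1 := rup hq0 hq1 ht k d
  have h2 := rup hq0 hq1 ht (k + 1) d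
  rw [show k + 1 + d + 1 = k + d + 2 by omega, show k + 1 + d = k + d + 1 by omega] at h2
  have hD : ((1 : ℂ) - (q:ℂ) ^ (1 + k)) * (1 - t * (q:ℂ) ^ d) ≠ 0 :=
    mul_ne_zero (hq_ne hq0 hq1 (by omega)) (ht_ne hq0 hq1 ht _)
  have h3 : ee q t (k + d + 1) (k + 1) * ((1 - (q:ℂ) ^ (1 + k)) * (1 - t * (q:ℂ) ^ d)) =
      ee q t (k + d + 1) k * ((1 - (q:ℂ) ^ (d + 1)) * (1 - t * (q:ℂ) ^ k)) := by
    have e1 : ee q t (k + d + 1) (k + 1) = ee q t (k + d + 1) k * rp q t (k + d + 1) k := by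
      unfold ee; exact Finset.prod_range_succ _ _
    rw [e1, rp, show k + d + 1 - k = d + 1 by omega, show d + 1 - 1 = d by omega,
      mul_assoc, div_mul_cancel₀ _ hD]
  simp only [pow_add, pow_one] at h1 h2 h3
  generalize hga : (q:ℂ) ^ k = a at h1 h2 h3
  generalize hgb : (q:ℂ) ^ d = b at h1 h2 h3
  have na1 : (1 : ℂ) - (q:ℂ) * b ≠ 0 := by
    rw [← hgb, ← pow_succ']; exact hq_ne hq0 hq1 (by omega)
  have na2 : (1 : ℂ) - t * (a * b) ≠ 0 := by
    rw [← hga, ← hgb, ← pow_add]; exact ht_ne hq0 hq1 ht _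
  have na3 : (1 : ℂ) - t * (a * b * (q:ℂ)) ≠ 0 := by
    rw [← hga, ← hgb, ← pow_add, ← pow_succ]; exact ht_ne hq0 hq1 ht _
  have na4 : (1 : ℂ) - (q:ℂ) * a ≠ 0 := by
    rw [← hga, ← pow_succ']; exact hq_ne hq0 hq1 (by omega)
  have na5 : (1 : ℂ) - t * b ≠ 0 := by
    rw [← hgb]; exact ht_ne hq0 hq1 ht _
  have hg : cc q t (k + d) * ((1 - t * (a * b)) * (1 - t * (a * b * (q:ℂ)))) =
      (1 - a * b * (q:ℂ)) * (1 - t ^ 2 * (a * b)) := by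
    have p1 : (q:ℂ) ^ (k + d) = a * b := by rw [← hga, ← hgb, pow_add]
    have p2 : (q:ℂ) ^ (k + d + 1) = a * b * (q:ℂ) := by rw [pow_succ, p1]
    rw [cc, p1, p2]
    exact div_mul_cancel₀ _ (mul_ne_zero na2 na3)
  apply mul_right_cancel₀ (b := ((1 - t * (a * b)) * (1 - t * (a * b * (q:ℂ)))) *
    ((1 - (q:ℂ) * b) * ((1 - (q:ℂ) * a) * (1 - t * b))))
    (mul_ne_zero (mul_ne_zero na2 na3) (mul_ne_zero na1 (mul_ne_zero na4 na5)))
  linear_combination (-(ee q t (k + d) k) * ((1 - (q:ℂ) * b) * ((1 - (q:ℂ) * a) * (1 - t * b)))) * hg +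
    ((1 - t ^ 2 * (a * b)) * (1 - (q:ℂ) * a) * (1 - (q:ℂ) * b)) * h1 +
    (-((1 - (q:ℂ) * a) * (1 - t * b) * (1 - t * (a * b)))) * h2 +
    ((1 - t * (a * b)) * ((1 - (q:ℂ) * b) * (1 - t * (a * b * (q:ℂ))) -
      (1 - t * b) * (1 - a * b * (q:ℂ) * (q:ℂ)))) * h3

include hq0 hq1 ht in
lemma threeterm (n : ℕ) {X : ℂ} (hX : X ≠ 0) :
    (X + X⁻¹) * Pu q t (n + 1) X = Pu q t (n + 2) X + cc q t n * Pu q t n X := by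
  set V : ℕ → ℂ := fun k => X ^ (n + 2 - k) * X⁻¹ ^ k with hV
  have ee0 : ∀ m : ℕ, ee q t m 0 = 1 := by intro m; simp [ee]
  have haveL : (X + X⁻¹) * Pu q t (n + 1) X =
      ((∑ k ∈ Finset.range (n + 1), ee q t (n + 1) (k + 1) * V (k + 1)) +
       (∑ k ∈ Finset.range (n + 1), ee q t (n + 1) k * V (k + 1))) +
        (V 0 + V (n + 2)) := by
    rw [Pu, Finset.mul_sum]
    have hterm : ∀ k ∈ Finset.range (n + 2),
        (X + X⁻¹) * (ee q t (n + 1) k * (X ^ (n + 1 - k) * X⁻¹ ^ k)) =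
        ee q t (n + 1) k * V k + ee q t (n + 1) k * V (k + 1) := by
      intro k hk
      simp only [Finset.mem_range] at hk
      have h1 : X * (X ^ (n + 1 - k) * X⁻¹ ^ k) = V k := by
        show _ = X ^ (n + 2 - k) * X⁻¹ ^ k
        rw [show n + 2 - k = (n + 1 - k) + 1 by omega, pow_succ]
        ring
      have h2 : X⁻¹ * (X ^ (n + 1 - k) * X⁻¹ ^ k) = V (k + 1) := by
        show _ = X ^ (n + 2 - (k + 1)) * X⁻¹ ^ (k + 1)
        rw [show n + 2 - (k + 1) = n + 1 - k by omega, pow_succ]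
        ring
      linear_combination ee q t (n + 1) k * h1 + ee q t (n + 1) k * h2
    rw [Finset.sum_congr rfl hterm, Finset.sum_add_distrib]
    have hfst : ∑ k ∈ Finset.range (n + 2), ee q t (n + 1) k * V k =
        (∑ k ∈ Finset.range (n + 1), ee q t (n + 1) (k + 1) * V (k + 1)) + V 0 := by
      rw [Finset.sum_range_succ']
      congr 1
      rw [ee0, one_mul]
    have hsnd : ∑ k ∈ Finset.range (n + 2), ee q t (n + 1) k * V (k + 1) =
        (∑ k ∈ Finset.range (n + 1), ee q t (n + 1) k * V (k + 1)) + V (n + 2) := by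
      rw [Finset.sum_range_succ, ee_nn hq0 hq1 ht, one_mul]
    rw [hfst, hsnd]
    ring
  have haveR : Pu q t (n + 2) X + cc q t n * Pu q t n X =
      ((∑ k ∈ Finset.range (n + 1), ee q t (n + 2) (k + 1) * V (k + 1)) +
       (∑ k ∈ Finset.range (n + 1), cc q t n * ee q t n k * V (k + 1))) +
        (V 0 + V (n + 2)) := by
    rw [Pu, Pu, Finset.mul_sum]
    have hfst : ∑ k ∈ Finset.range (n + 3), ee q t (n + 2) k * (X ^ (n + 2 - k) * X⁻¹ ^ k) =
        ((∑ k ∈ Finset.range (n + 1), ee q t (n + 2) (k + 1) * V (k + 1)) + V 0) + V (n + 2) := by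
      rw [Finset.sum_range_succ, Finset.sum_range_succ', ee_nn hq0 hq1 ht, ee0, one_mul, one_mul]
    have hsnd : ∀ k ∈ Finset.range (n + 1),
        cc q t n * (ee q t n k * (X ^ (n - k) * X⁻¹ ^ k)) =
        cc q t n * ee q t n k * V (k + 1) := by
      intro k hk
      simp only [Finset.mem_range] at hk
      have hv1 : V (k + 1) = X ^ (n - k) * X⁻¹ ^ k := by
        show X ^ (n + 2 - (k + 1)) * X⁻¹ ^ (k + 1) = _
        rw [show n + 2 - (k + 1) = (n - k) + 1 by omega, pow_succ, pow_succ]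
        have : X * X⁻¹ = 1 := mul_inv_cancel₀ hX
        linear_combination (X ^ (n - k) * X⁻¹ ^ k) * this
      rw [hv1]
      ring
    rw [hfst, Finset.sum_congr rfl hsnd]
    ring
  rw [haveL, haveR]
  have hcoeff : ∀ k ∈ Finset.range (n + 1),
      ee q t (n + 1) (k + 1) * V (k + 1) + ee q t (n + 1) k * V (k + 1) =
      ee q t (n + 2) (k + 1) * V (k + 1) + cc q t n * ee q t n k * V (k + 1) := by
    intro k hk
    simp only [Finset.mem_range] at hk
    have := coeff3 hq0 hq1 ht (by omega : k ≤ n)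
    linear_combination V (k + 1) * this
  have := Finset.sum_congr rfl hcoeff
  rw [Finset.sum_add_distrib, Finset.sum_add_distrib] at this
  linear_combination this

include hq0 hq1 ht in
lemma qdiff (m : ℕ) {u X : ℂ} (hu : u ≠ 0) (hu2 : u ^ 2 = (q:ℂ)) (hX : X ≠ 0) :
    (1 - t * X ^ 2) * (u ^ m * Pu q t m (u * X)) - (X ^ 2 - t) * (u ^ m * Pu q t m (u⁻¹ * X)) =
    (t * (q:ℂ) ^ m + 1) * ((1 - X ^ 2) * Pu q t m X) := by
  set W : ℕ → ℂ := fun k => X ^ (m + 2 - k) * X⁻¹ ^ k with hW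
  have hS1 : u ^ m * Pu q t m (u * X) =
      ∑ k ∈ Finset.range (m + 1), ee q t m k * (q:ℂ) ^ (m - k) * (X ^ (m - k) * X⁻¹ ^ k) := by
    rw [Pu, Finset.mul_sum]
    apply Finset.sum_congr rfl
    intro k hk
    simp only [Finset.mem_range] at hk
    have e1 : (u * X) ^ (m - k) = u ^ (m - k) * X ^ (m - k) := mul_pow _ _ _
    have e2 : ((u * X)⁻¹) ^ k = u⁻¹ ^ k * X⁻¹ ^ k := by rw [mul_inv, mul_pow]
    have e3 : u ^ m = u ^ (m - k) * u ^ k := by rw [← pow_add]; congr 1; omega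
    have e4 : u ^ k * u⁻¹ ^ k = 1 := by rw [inv_pow, mul_inv_cancel₀ (pow_ne_zero _ hu)]
    have e5 : u ^ (m - k) * u ^ (m - k) = (q:ℂ) ^ (m - k) := by
      rw [← hu2, ← pow_add, ← pow_mul]; congr 1; omega
    rw [e1, e2, e3]
    linear_combination (ee q t m k * X ^ (m - k) * X⁻¹ ^ k * (u ^ k * u⁻¹ ^ k)) * e5 +
      (ee q t m k * X ^ (m - k) * X⁻¹ ^ k * (q:ℂ) ^ (m - k)) * e4
  have hS2 : u ^ m * Pu q t m (u⁻¹ * X) =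
      ∑ k ∈ Finset.range (m + 1), ee q t m k * (q:ℂ) ^ k * (X ^ (m - k) * X⁻¹ ^ k) := by
    rw [Pu, Finset.mul_sum]
    apply Finset.sum_congr rfl
    intro k hk
    simp only [Finset.mem_range] at hk
    have e1 : (u⁻¹ * X) ^ (m - k) = u⁻¹ ^ (m - k) * X ^ (m - k) := mul_pow _ _ _
    have e2 : ((u⁻¹ * X)⁻¹) ^ k = u ^ k * X⁻¹ ^ k := by rw [mul_inv, inv_inv, mul_pow]
    have e3 : u ^ m = u ^ (m - k) * u ^ k := by rw [← pow_add]; congr 1; omega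
    have e4 : u ^ (m - k) * u⁻¹ ^ (m - k) = 1 := by
      rw [inv_pow, mul_inv_cancel₀ (pow_ne_zero _ hu)]
    have e5 : u ^ k * u ^ k = (q:ℂ) ^ k := by
      rw [← hu2, ← pow_add, ← pow_mul]; congr 1; omega
    rw [e1, e2, e3]
    linear_combination (ee q t m k * X ^ (m - k) * X⁻¹ ^ k * (u ^ (m - k) * u⁻¹ ^ (m - k))) * e5 +
      (ee q t m k * X ^ (m - k) * X⁻¹ ^ k * (q:ℂ) ^ k) * e4
  have hM1 : ∀ k ∈ Finset.range (m + 1), X ^ (m - k) * X⁻¹ ^ k = W (k + 1) := by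
    intro k hk
    simp only [Finset.mem_range] at hk
    show _ = X ^ (m + 2 - (k + 1)) * X⁻¹ ^ (k + 1)
    rw [show m + 2 - (k + 1) = (m - k) + 1 by omega, pow_succ, pow_succ]
    have hc : X * X⁻¹ = 1 := mul_inv_cancel₀ hX
    linear_combination (-(X ^ (m - k) * X⁻¹ ^ k)) * hc
  have hM2 : ∀ k ∈ Finset.range (m + 1), X ^ 2 * (X ^ (m - k) * X⁻¹ ^ k) = W k := by
    intro k hk
    simp only [Finset.mem_range] at hk
    show _ = X ^ (m + 2 - k) * X⁻¹ ^ k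
    rw [show m + 2 - k = (m - k) + 2 by omega, pow_add]
    ring
  rw [hS1, hS2, Pu]
  have hL1 : (1 - t * X ^ 2) *
      ∑ k ∈ Finset.range (m + 1), ee q t m k * (q:ℂ) ^ (m - k) * (X ^ (m - k) * X⁻¹ ^ k) =
      (∑ k ∈ Finset.range (m + 1), ee q t m k * (q:ℂ) ^ (m - k) * W (k + 1)) -
      t * ∑ k ∈ Finset.range (m + 1), ee q t m k * (q:ℂ) ^ (m - k) * W k := by
    rw [Finset.mul_sum]
    have hpt : ∀ k ∈ Finset.range (m + 1),
        (1 - t * X ^ 2) * (ee q t m k * (q:ℂ) ^ (m - k) * (X ^ (m - k) * X⁻¹ ^ k)) =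
        ee q t m k * (q:ℂ) ^ (m - k) * W (k + 1) - t * (ee q t m k * (q:ℂ) ^ (m - k) * W k) := by
      intro k hk
      linear_combination (ee q t m k * (q:ℂ) ^ (m - k)) * hM1 k hk -
        t * (ee q t m k * (q:ℂ) ^ (m - k)) * hM2 k hk
    rw [Finset.sum_congr rfl hpt, Finset.sum_sub_distrib, ← Finset.mul_sum]
  have hL2 : (X ^ 2 - t) *
      ∑ k ∈ Finset.range (m + 1), ee q t m k * (q:ℂ) ^ k * (X ^ (m - k) * X⁻¹ ^ k) =
      (∑ k ∈ Finset.range (m + 1), ee q t m k * (q:ℂ) ^ k * W k) -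
      t * ∑ k ∈ Finset.range (m + 1), ee q t m k * (q:ℂ) ^ k * W (k + 1) := by
    rw [Finset.mul_sum]
    have hpt : ∀ k ∈ Finset.range (m + 1),
        (X ^ 2 - t) * (ee q t m k * (q:ℂ) ^ k * (X ^ (m - k) * X⁻¹ ^ k)) =
        ee q t m k * (q:ℂ) ^ k * W k - t * (ee q t m k * (q:ℂ) ^ k * W (k + 1)) := by
      intro k hk
      linear_combination (ee q t m k * (q:ℂ) ^ k) * hM2 k hk -
        t * (ee q t m k * (q:ℂ) ^ k) * hM1 k hk
    rw [Finset.sum_congr rfl hpt, Finset.sum_sub_distrib, ← Finset.mul_sum]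
  have hR : (1 - X ^ 2) * ∑ k ∈ Finset.range (m + 1), ee q t m k * (X ^ (m - k) * X⁻¹ ^ k) =
      (∑ k ∈ Finset.range (m + 1), ee q t m k * W (k + 1)) -
      ∑ k ∈ Finset.range (m + 1), ee q t m k * W k := by
    rw [Finset.mul_sum]
    have hpt : ∀ k ∈ Finset.range (m + 1),
        (1 - X ^ 2) * (ee q t m k * (X ^ (m - k) * X⁻¹ ^ k)) =
        ee q t m k * W (k + 1) - ee q t m k * W k := by
      intro k hk
      linear_combination (ee q t m k) * hM1 k hk - (ee q t m k) * hM2 k hk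
    rw [Finset.sum_congr rfl hpt, Finset.sum_sub_distrib]
  rw [hL1, hL2, hR]
  -- key identity
  have hkey : (∑ k ∈ Finset.range (m + 1), ee q t m k * (q:ℂ) ^ (m - k) * W (k + 1)) +
      t * (∑ k ∈ Finset.range (m + 1), ee q t m k * (q:ℂ) ^ k * W (k + 1)) -
      (t * (q:ℂ) ^ m + 1) * (∑ k ∈ Finset.range (m + 1), ee q t m k * W (k + 1)) =
      t * (∑ k ∈ Finset.range (m + 1), ee q t m k * (q:ℂ) ^ (m - k) * W k) +
      (∑ k ∈ Finset.range (m + 1), ee q t m k * (q:ℂ) ^ k * W k) -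
      (t * (q:ℂ) ^ m + 1) * (∑ k ∈ Finset.range (m + 1), ee q t m k * W k) := by
    have hAL : (∑ k ∈ Finset.range (m + 1), ee q t m k * (q:ℂ) ^ (m - k) * W (k + 1)) +
        t * (∑ k ∈ Finset.range (m + 1), ee q t m k * (q:ℂ) ^ k * W (k + 1)) -
        (t * (q:ℂ) ^ m + 1) * (∑ k ∈ Finset.range (m + 1), ee q t m k * W (k + 1)) =
        ∑ k ∈ Finset.range (m + 1),
          ee q t m k * (((q:ℂ) ^ (m - k) + t * (q:ℂ) ^ k) - (t * (q:ℂ) ^ m + 1)) * W (k + 1) := by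
      rw [Finset.mul_sum, Finset.mul_sum, ← Finset.sum_add_distrib, ← Finset.sum_sub_distrib]
      exact Finset.sum_congr rfl fun k _ => by ring
    have hBL : t * (∑ k ∈ Finset.range (m + 1), ee q t m k * (q:ℂ) ^ (m - k) * W k) +
        (∑ k ∈ Finset.range (m + 1), ee q t m k * (q:ℂ) ^ k * W k) -
        (t * (q:ℂ) ^ m + 1) * (∑ k ∈ Finset.range (m + 1), ee q t m k * W k) =
        ∑ k ∈ Finset.range (m + 1),
          ee q t m k * ((t * (q:ℂ) ^ (m - k) + (q:ℂ) ^ k) - (t * (q:ℂ) ^ m + 1)) * W k := by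
      rw [Finset.mul_sum, Finset.mul_sum, ← Finset.sum_add_distrib, ← Finset.sum_sub_distrib]
      exact Finset.sum_congr rfl fun k _ => by ring
    rw [hAL, hBL]
    rw [Finset.sum_range_succ, Nat.sub_self, pow_zero,
      show ee q t m m * ((1 + t * (q:ℂ) ^ m) - (t * (q:ℂ) ^ m + 1)) * W (m + 1) = 0 by ring,
      add_zero, Finset.sum_range_succ']
    rw [show ee q t m 0 * ((t * (q:ℂ) ^ (m - 0) + (q:ℂ) ^ 0) - (t * (q:ℂ) ^ m + 1)) * W 0 = 0 by
      rw [Nat.sub_zero, pow_zero]; ring, add_zero]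
    apply Finset.sum_congr rfl
    intro k hk
    simp only [Finset.mem_range] at hk
    have hd1 : m - k = (m - k - 1) + 1 := by omega
    have hd2 : m - (k + 1) = m - k - 1 := by omega
    set d := m - k - 1 with hdd
    have hm : m = k + 1 + d := by omega
    have hrpe : ee q t m (k + 1) = ee q t m k * rp q t m k := by
      unfold ee; exact Finset.prod_range_succ _ _
    have hDne : ((1 : ℂ) - (q:ℂ) ^ (1 + k)) * (1 - t * (q:ℂ) ^ d) ≠ 0 :=
      mul_ne_zero (hq_ne hq0 hq1 (by omega)) (ht_ne hq0 hq1 ht _)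
    have hrp2 : rp q t m k * (((1 : ℂ) - (q:ℂ) ^ (1 + k)) * (1 - t * (q:ℂ) ^ d)) =
        (1 - (q:ℂ) ^ (d + 1)) * (1 - t * (q:ℂ) ^ k) := by
      rw [rp, show m - k = d + 1 by omega, show d + 1 - 1 = d by omega]
      exact div_mul_cancel₀ _ hDne
    rw [hrpe, hd1, hd2]
    apply mul_right_cancel₀ hDne
    have hqm : (q:ℂ) ^ m = (q:ℂ) ^ k * (q:ℂ) ^ d * (q:ℂ) := by
      rw [hm, pow_add, pow_add, pow_one]; ring
    rw [hqm]
    linear_combination (-(ee q t m k * ((t * (q:ℂ) ^ d + (q:ℂ) ^ (k + 1)) -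
      (t * ((q:ℂ) ^ k * (q:ℂ) ^ d * (q:ℂ)) + 1)) * W (k + 1))) * hrp2
  linear_combination hkey

/-- principal specialization value -/
def Ev (q : ℝ) (t s : ℂ) (n : ℕ) : ℂ :=
  s⁻¹ ^ n * ∏ i ∈ Finset.range n, (1 - t ^ 2 * (q:ℂ) ^ i) / (1 - t * (q:ℂ) ^ i)

lemma Ev_zero {s : ℂ} : Ev q t s 0 = 1 := by simp [Ev]

include hq0 hq1 ht in
lemma ht2 : ‖t ^ 2‖ < 1 := by
  rw [norm_pow]
  exact pow_lt_one₀ (norm_nonneg t) ht (by omega)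

include hq0 hq1 ht in
lemma Ev_succ {s : ℂ} (hs0 : s ≠ 0) (n : ℕ) :
    Ev q t s (n + 1) * (s * (1 - t * (q:ℂ) ^ n)) = Ev q t s n * (1 - t ^ 2 * (q:ℂ) ^ n) := by
  rw [Ev, Ev, pow_succ, Finset.prod_range_succ]
  have h1 := ht_ne hq0 hq1 ht n
  have e1 : (1 - t ^ 2 * (q:ℂ) ^ n) / (1 - t * (q:ℂ) ^ n) * (1 - t * (q:ℂ) ^ n) =
      1 - t ^ 2 * (q:ℂ) ^ n := div_mul_cancel₀ _ h1
  have e2 : s⁻¹ * s = 1 := inv_mul_cancel₀ hs0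
  linear_combination (s⁻¹ ^ n * ∏ i ∈ Finset.range n,
      (1 - t ^ 2 * (q:ℂ) ^ i) / (1 - t * (q:ℂ) ^ i)) * e1 +
    (s⁻¹ ^ n * (∏ i ∈ Finset.range n, (1 - t ^ 2 * (q:ℂ) ^ i) / (1 - t * (q:ℂ) ^ i)) *
      ((1 - t ^ 2 * (q:ℂ) ^ n) / (1 - t * (q:ℂ) ^ n)) * (1 - t * (q:ℂ) ^ n)) * e2

include hq0 hq1 ht in
lemma Ev_ne {s : ℂ} (hs0 : s ≠ 0) (n : ℕ) : Ev q t s n ≠ 0 := by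
  apply mul_ne_zero (pow_ne_zero _ (inv_ne_zero hs0))
  apply Finset.prod_ne_zero_iff.2
  intro i _
  exact div_ne_zero (ht_ne (t := t ^ 2) hq0 hq1 (ht2 hq0 hq1 ht) i) (ht_ne hq0 hq1 ht i)

lemma Pu_zero (X : ℂ) : Pu q t 0 X = 1 := by simp [Pu, ee]

include hq0 hq1 ht in
lemma Pu_one (X : ℂ) : Pu q t 1 X = X + X⁻¹ := by
  rw [Pu, Finset.sum_range_succ, Finset.sum_range_one]
  have h0 : ee q t 1 0 = 1 := by simp [ee]
  have h1 : ee q t 1 1 = 1 := ee_nn hq0 hq1 ht 1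
  rw [h0, h1]
  norm_num

include hq0 hq1 ht in
lemma eval_L3 {s : ℂ} (hs0 : s ≠ 0) (hts : t = s ^ 2) (m : ℕ) :
    Pu q t m s = Ev q t s m := by
  induction m using Nat.twoStepInduction with
  | zero => rw [Pu_zero, Ev_zero]
  | one =>
    rw [Pu_one hq0 hq1 ht, Ev, Finset.prod_range_one]
    simp only [pow_one, pow_zero, mul_one]
    have n1 : (1 : ℂ) - t ≠ 0 := by
      have := ht_ne hq0 hq1 ht 0
      rwa [pow_zero, mul_one] at this
    rw [hts] at n1 ⊢
    field_simp
    ring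
  | more m IH0 IH1 =>
    have h3 := threeterm hq0 hq1 ht m (X := s) hs0
    have hPm2 : Pu q t (m + 2) s = (s + s⁻¹) * Pu q t (m + 1) s - cc q t m * Pu q t m s := by
      linear_combination -h3
    have hE2 : Ev q t s (m + 2) =
        Ev q t s (m + 1) * (1 - t ^ 2 * (q:ℂ) ^ (m + 1)) / (s * (1 - t * (q:ℂ) ^ (m + 1))) := by
      rw [eq_div_iff (mul_ne_zero hs0 (ht_ne hq0 hq1 ht (m + 1)))]
      exact Ev_succ hq0 hq1 ht hs0 (m + 1)
    have hEm : Ev q t s m =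
        Ev q t s (m + 1) * (s * (1 - t * (q:ℂ) ^ m)) / (1 - t ^ 2 * (q:ℂ) ^ m) := by
      rw [eq_div_iff (ht_ne (t := t ^ 2) hq0 hq1 (ht2 hq0 hq1 ht) m)]
      exact (Ev_succ hq0 hq1 ht hs0 m).symm
    have n1 : (1 : ℂ) - t * (q:ℂ) ^ m ≠ 0 := ht_ne hq0 hq1 ht m
    have n2 : (1 : ℂ) - t * (q:ℂ) ^ (m + 1) ≠ 0 := ht_ne hq0 hq1 ht (m + 1)
    have n3 : (1 : ℂ) - t ^ 2 * (q:ℂ) ^ m ≠ 0 := ht_ne (t := t ^ 2) hq0 hq1 (ht2 hq0 hq1 ht) m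
    have n4 : (1 : ℂ) - t ^ 2 * (q:ℂ) ^ (m + 1) ≠ 0 :=
      ht_ne (t := t ^ 2) hq0 hq1 (ht2 hq0 hq1 ht) (m + 1)
    rw [hPm2, IH0, IH1, hE2, hEm, cc]
    rw [hts] at n1 n2 n3 n4 ⊢
    have n5 : (1 : ℂ) - s ^ 4 * (q:ℂ) ^ m ≠ 0 := by rw [show s ^ 4 = (s ^ 2) ^ 2 by ring]; exact n3
    have n6 : (1 : ℂ) - s ^ 4 * (q:ℂ) ^ (m + 1) ≠ 0 := by rw [show s ^ 4 = (s ^ 2) ^ 2 by ring]; exact n4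
    field_simp
    ring

include hq0 hq1 in
lemma duality_S {s u : ℂ} (hs0 : s ≠ 0) (hs2 : ‖s ^ 2‖ < 1) (hu0 : u ≠ 0)
    (hu2 : u ^ 2 = (q:ℂ)) :
    ∀ n m : ℕ, Pu q (s ^ 2) m (s * u ^ n) * Ev q (s ^ 2) s n =
      Pu q (s ^ 2) n (s * u ^ m) * Ev q (s ^ 2) s m := by
  have hL3 : ∀ k, Pu q (s ^ 2) k s = Ev q (s ^ 2) s k := eval_L3 hq0 hq1 hs2 hs0 rfl
  have hum : ∀ k : ℕ, u ^ k ≠ 0 := fun k => pow_ne_zero k hu0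
  have hsuk : ∀ k : ℕ, s * u ^ k ≠ 0 := fun k => mul_ne_zero hs0 (hum k)
  have hq2 : ∀ k : ℕ, (q:ℂ) ^ k = u ^ k * u ^ k := by
    intro k
    rw [← hu2, ← pow_mul, ← pow_add]
    congr 1
    omega
  have nA : ∀ e : ℕ, (1:ℂ) - s ^ 2 * (q:ℂ) ^ e ≠ 0 := ht_ne (t := s ^ 2) hq0 hq1 hs2
  have nB : ∀ e : ℕ, (1:ℂ) - (s ^ 2) ^ 2 * (q:ℂ) ^ e ≠ 0 :=
    ht_ne (t := (s ^ 2) ^ 2) hq0 hq1 (ht2 (t := s ^ 2) hq0 hq1 hs2)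
  have nD : (1:ℂ) - s ^ 2 * s ^ 2 ≠ 0 := by
    intro h
    apply nB 0
    rw [pow_zero, mul_one]
    linear_combination h
  have S0 : ∀ m : ℕ, Pu q (s ^ 2) m (s * u ^ 0) * Ev q (s ^ 2) s 0 =
      Pu q (s ^ 2) 0 (s * u ^ m) * Ev q (s ^ 2) s m := by
    intro m
    rw [pow_zero, mul_one, Ev_zero, mul_one, Pu_zero, one_mul, hL3]
  have S1 : ∀ m : ℕ, Pu q (s ^ 2) m (s * u ^ 1) * Ev q (s ^ 2) s 1 =
      Pu q (s ^ 2) 1 (s * u ^ m) * Ev q (s ^ 2) s m := by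
    intro m
    have hqd := qdiff (t := s ^ 2) hq0 hq1 hs2 m (X := s) hu0 hu2 hs0
    rw [show s ^ 2 - s ^ 2 = (0:ℂ) by ring, zero_mul, sub_zero, hL3 m, hq2 m] at hqd
    have hE1 := Ev_succ (t := s ^ 2) hq0 hq1 hs2 hs0 0
    norm_num at hE1
    rw [Ev_zero, one_mul] at hE1
    have hi := mul_inv_cancel₀ (hsuk m)
    rw [pow_one, Pu_one (t := s ^ 2) hq0 hq1 hs2]
    apply mul_right_cancel₀ (b := (1 - s ^ 2 * s ^ 2) * u ^ m * s)
      (mul_ne_zero (mul_ne_zero nD (hum m)) hs0)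
    rw [mul_comm s u]
    linear_combination (Ev q (s ^ 2) s 1 * s) * hqd +
      ((s ^ 2 * (u ^ m * u ^ m) + 1) * Ev q (s ^ 2) s m) * hE1 +
      (-(Ev q (s ^ 2) s m * (1 - s ^ 2 * s ^ 2))) * hi
  have Sstep : ∀ n : ℕ,
      (∀ m, Pu q (s ^ 2) m (s * u ^ n) * Ev q (s ^ 2) s n =
        Pu q (s ^ 2) n (s * u ^ m) * Ev q (s ^ 2) s m) →
      (∀ m, Pu q (s ^ 2) m (s * u ^ (n + 1)) * Ev q (s ^ 2) s (n + 1) =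
        Pu q (s ^ 2) (n + 1) (s * u ^ m) * Ev q (s ^ 2) s m) →
      (∀ m, Pu q (s ^ 2) m (s * u ^ (n + 2)) * Ev q (s ^ 2) s (n + 2) =
        Pu q (s ^ 2) (n + 2) (s * u ^ m) * Ev q (s ^ 2) s m) := by
    intro n IH0 IH1 m
    have hqd := qdiff (t := s ^ 2) hq0 hq1 hs2 m (X := s * u ^ (n + 1)) hu0 hu2 (hsuk (n + 1))
    have e1 : u * (s * u ^ (n + 1)) = s * u ^ (n + 2) := by
      rw [show n + 2 = (n + 1) + 1 by omega, pow_succ]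
      ring
    have e2 : u⁻¹ * (s * u ^ (n + 1)) = s * u ^ n := by
      rw [pow_succ]
      field_simp
    have e3 : (s * u ^ (n + 1)) ^ 2 = s ^ 2 * (q:ℂ) ^ (n + 1) := by
      rw [mul_pow, ← hu2, ← pow_mul, ← pow_mul]
      congr 2
      omega
    rw [e1, e2, e3, hq2 m] at hqd
    have h3 := threeterm (t := s ^ 2) hq0 hq1 hs2 n (X := s * u ^ m) (hsuk m)
    have hn1 := IH1 m
    have hn0 := IH0 m
    have hE2 := Ev_succ (t := s ^ 2) hq0 hq1 hs2 hs0 (n + 1)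
    rw [show n + 1 + 1 = n + 2 by omega] at hE2
    have hE1 := Ev_succ (t := s ^ 2) hq0 hq1 hs2 hs0 n
    have hcc : cc q (s ^ 2) n * ((1 - s ^ 2 * (q:ℂ) ^ n) * (1 - s ^ 2 * (q:ℂ) ^ (n + 1))) =
        (1 - (q:ℂ) ^ (n + 1)) * (1 - (s ^ 2) ^ 2 * (q:ℂ) ^ n) := by
      rw [cc]
      exact div_mul_cancel₀ _ (mul_ne_zero (nA n) (nA (n + 1)))
    have hi := mul_inv_cancel₀ (hsuk m)
    apply mul_right_cancel₀ (b := s ^ 2 * u ^ m * ((1 - (s ^ 2) ^ 2 * (q:ℂ) ^ (n + 1)) *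
      ((1 - s ^ 2 * (q:ℂ) ^ (n + 1)) * (1 - s ^ 2 * (q:ℂ) ^ n))))
      (mul_ne_zero (mul_ne_zero (pow_ne_zero 2 hs0) (hum m))
        (mul_ne_zero (nB (n + 1)) (mul_ne_zero (nA (n + 1)) (nA n))))
    linear_combination
      (Ev q (s ^ 2) s (n + 2) * s ^ 2 *
        ((1 - s ^ 2 * (q:ℂ) ^ (n + 1)) * (1 - s ^ 2 * (q:ℂ) ^ n))) * hqd +
      (Ev q (s ^ 2) s m * (s ^ 2 * u ^ m * ((1 - (s ^ 2) ^ 2 * (q:ℂ) ^ (n + 1)) *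
        ((1 - s ^ 2 * (q:ℂ) ^ (n + 1)) * (1 - s ^ 2 * (q:ℂ) ^ n))))) * h3 +
      ((s ^ 2 * u ^ m * ((1 - (s ^ 2) ^ 2 * (q:ℂ) ^ (n + 1)) *
        ((1 - s ^ 2 * (q:ℂ) ^ (n + 1)) * (1 - s ^ 2 * (q:ℂ) ^ n)))) *
        (s * u ^ m + (s * u ^ m)⁻¹)) * hn1 +
      (-((s ^ 2 * u ^ m * ((1 - (s ^ 2) ^ 2 * (q:ℂ) ^ (n + 1)) *
        ((1 - s ^ 2 * (q:ℂ) ^ (n + 1)) * (1 - s ^ 2 * (q:ℂ) ^ n)))) * cc q (s ^ 2) n)) * hn0 +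
      (Pu q (s ^ 2) m (s * u ^ n) * Ev q (s ^ 2) s n * s ^ 2 * u ^ m *
        (1 - (s ^ 2) ^ 2 * (q:ℂ) ^ (n + 1))) * hcc +
      (s * (1 - s ^ 2 * (q:ℂ) ^ n) * (s ^ 2 * (q:ℂ) ^ (n + 1) - s ^ 2) * u ^ m *
        Pu q (s ^ 2) m (s * u ^ n) +
       s * (1 - s ^ 2 * (q:ℂ) ^ n) * (s ^ 2 * (u ^ m * u ^ m) + 1) *
        (1 - s ^ 2 * (q:ℂ) ^ (n + 1)) * Pu q (s ^ 2) m (s * u ^ (n + 1))) * hE2 +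
      (-(Pu q (s ^ 2) m (s * u ^ (n + 1)) * Ev q (s ^ 2) s (n + 1) *
        (1 - (s ^ 2) ^ 2 * (q:ℂ) ^ (n + 1)) * (1 - s ^ 2 * (q:ℂ) ^ (n + 1)) *
        (1 - s ^ 2 * (q:ℂ) ^ n) * s)) * hi +
      (Pu q (s ^ 2) m (s * u ^ n) * s ^ 2 * u ^ m *
        (1 - (s ^ 2) ^ 2 * (q:ℂ) ^ (n + 1)) * ((q:ℂ) ^ (n + 1) - 1)) * hE1
  have key : ∀ n : ℕ,
      (∀ m, Pu q (s ^ 2) m (s * u ^ n) * Ev q (s ^ 2) s n =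
        Pu q (s ^ 2) n (s * u ^ m) * Ev q (s ^ 2) s m) ∧
      (∀ m, Pu q (s ^ 2) m (s * u ^ (n + 1)) * Ev q (s ^ 2) s (n + 1) =
        Pu q (s ^ 2) (n + 1) (s * u ^ m) * Ev q (s ^ 2) s m) := by
    intro n
    induction n with
    | zero => exact ⟨S0, S1⟩
    | succ k IH => exact ⟨IH.2, Sstep k IH.1 IH.2⟩
  intro n m
  exact (key n).1 m

end basic
end RogersAux

/-- the duality formula for the symmetric Macdonald polynomials of type A₁. -/
theorem rogersA1_duality (q : ℝ) (hq0 : 0 < q) (hq1 : q < 1)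
    (s : ℂ) (hs0 : s ≠ 0) (hs1 : ‖s‖ < 1) (m n : ℕ) :
    RogersA1 q (s ^ 2) m (s * ((q ^ ((n : ℝ) / 2) : ℝ) : ℂ)) * RogersA1 q (s ^ 2) n s =
    RogersA1 q (s ^ 2) n (s * ((q ^ ((m : ℝ) / 2) : ℝ) : ℂ)) * RogersA1 q (s ^ 2) m s := by
  have hs2 : ‖s ^ 2‖ < 1 := by
    rw [norm_pow]
    exact pow_lt_one₀ (norm_nonneg s) hs1 (by omega)
  set u : ℂ := ((q ^ ((1:ℝ)/2) : ℝ) : ℂ) with hu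
  have hqpos : (0:ℝ) < q ^ ((1:ℝ)/2) := Real.rpow_pos_of_pos hq0 _
  have hu0 : u ≠ 0 := Complex.ofReal_ne_zero.mpr (ne_of_gt hqpos)
  have hu2 : u ^ 2 = (q:ℂ) := by
    rw [hu, ← Complex.ofReal_pow]
    congr 1
    rw [← Real.rpow_natCast (q ^ ((1:ℝ)/2)) 2, ← Real.rpow_mul hq0.le]
    norm_num
  have hun : ∀ k : ℕ, ((q ^ ((k:ℝ)/2) : ℝ) : ℂ) = u ^ k := by
    intro k
    rw [hu, ← Complex.ofReal_pow]
    congr 1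
    rw [← Real.rpow_natCast (q ^ ((1:ℝ)/2)) k, ← Real.rpow_mul hq0.le]
    congr 1
    ring
  have hsu : ∀ k : ℕ, s * u ^ k ≠ 0 := fun k => mul_ne_zero hs0 (pow_ne_zero k hu0)
  rw [hun n, hun m]
  rw [RogersAux.rogers_eq_Pu hq0 hq1 hs2 m (hsu n),
    RogersAux.rogers_eq_Pu hq0 hq1 hs2 n (hsu m),
    RogersAux.rogers_eq_Pu hq0 hq1 hs2 n hs0,
    RogersAux.rogers_eq_Pu hq0 hq1 hs2 m hs0,
    RogersAux.eval_L3 hq0 hq1 hs2 hs0 rfl n,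
    RogersAux.eval_L3 hq0 hq1 hs2 hs0 rfl m]
  exact RogersAux.duality_S hq0 hq1 hs0 hs2 hu0 hu2 n m

end
end
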